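/- arXiv:2307.11625 — 13 statements merged into one kernel-verified Lean document; each statement's English description precedes it below -/
import Mathlib

section
/- A graph G is an ⟨i,j⟩ competition graph (the competition graph of some loopless digraph in which every vertex has indegree at most i and outdegree at most j) if and only if there is an edge clique cover C = {C_1,...,C_p} of G such that (i) |C_t| ≤ i for each t, (ii) each vertex of G belongs to at most j cliques of C, (iii) the family {V(G)−C_1,...,V(G)−C_p} has a system of distinct representatives, and (iv) p ≤ |V(G)|. -/
/-- The competition graph of a digraph `D`: `u` and `v` are adjacent iff they are
distinct and have a common out-neighbor. -/
def compGraph {V : Type*} (D : V → V → Prop) : SimpleGraph V where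
  Adj u v := u ≠ v ∧ ∃ w, D u w ∧ D v w
  symm := by
    constructor
    rintro u v ⟨h, w, h1, h2⟩
    exact ⟨h.symm, w, h2, h1⟩
  loopless := by
    constructor
    rintro u ⟨h, -⟩
    exact h rfl

/-- A loopless digraph with every indegree ≤ i and every outdegree ≤ j. -/
def IsIJDigraph {V : Type*} (D : V → V → Prop) (i j : ℕ) : Prop :=
  (∀ v, ¬ D v v) ∧ (∀ v, {u | D u v}.ncard ≤ i) ∧ (∀ u, {w | D u w}.ncard ≤ j)

/-- `G` is an ⟨i,j⟩ competition graph. -/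
def IsIJCompGraph {V : Type*} (G : SimpleGraph V) (i j : ℕ) : Prop :=
  ∃ D : V → V → Prop, IsIJDigraph D i j ∧ compGraph D = G

theorem stmt0 {V : Type*} [Fintype V] (G : SimpleGraph V) (i j : ℕ)
    (hi : 1 ≤ i) (hj : 1 ≤ j) :
    IsIJCompGraph G i j ↔
      ∃ (p : ℕ) (C : Fin p → Finset V),
        (∀ t, G.IsClique (C t : Set V)) ∧
        (∀ u v, G.Adj u v → ∃ t, u ∈ C t ∧ v ∈ C t) ∧
        (∀ t, (C t).card ≤ i) ∧
        (∀ v : V, ({t | v ∈ C t} : Set (Fin p)).ncard ≤ j) ∧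
        (∃ f : Fin p → V, Function.Injective f ∧ ∀ t, f t ∉ C t) ∧
        p ≤ Fintype.card V := by
  classical
  constructor
  · rintro ⟨D, ⟨hloop, hin, hout⟩, rfl⟩
    refine ⟨Fintype.card V, fun t => Finset.univ.filter
      (fun u => D u ((Fintype.equivFin V).symm t)), ?_, ?_, ?_, ?_, ?_, le_refl _⟩
    · intro t u hu v hv hne
      simp only [Finset.coe_filter, Set.mem_setOf_eq] at hu hv
      exact ⟨hne, _, hu.2, hv.2⟩
    · rintro u v ⟨hne, w, hu, hv⟩
      exact ⟨(Fintype.equivFin V) w, by simp [hu], by simp [hv]⟩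
    · intro t
      have h1 : ((Finset.univ.filter
          (fun u => D u ((Fintype.equivFin V).symm t))) : Set V)
          = {u | D u ((Fintype.equivFin V).symm t)} := by ext u; simp
      rw [← Set.ncard_coe_finset, h1]; exact hin _
    · intro v
      have h1 : {t : Fin (Fintype.card V) | v ∈ Finset.univ.filter
          (fun u => D u ((Fintype.equivFin V).symm t))}
          = {t | D v ((Fintype.equivFin V).symm t)} := by ext t; simp
      rw [h1]
      have h2 : (Fintype.equivFin V).symm '' {t | D v ((Fintype.equivFin V).symm t)}
          = {w | D v w} := by
        ext w
        constructor
        · rintro ⟨t, ht, rfl⟩; exact ht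
        · intro hw; exact ⟨(Fintype.equivFin V) w, by simpa using hw, by simp⟩
      calc {t | D v ((Fintype.equivFin V).symm t)}.ncard
          = ((Fintype.equivFin V).symm '' {t | D v ((Fintype.equivFin V).symm t)}).ncard :=
            (Set.ncard_image_of_injective _ (Fintype.equivFin V).symm.injective).symm
        _ = {w | D v w}.ncard := by rw [h2]
        _ ≤ j := hout v
    · refine ⟨fun t => (Fintype.equivFin V).symm t,
        (Fintype.equivFin V).symm.injective, fun t ht => ?_⟩
      simp only [Finset.mem_filter] at ht
      exact hloop _ ht.2
  · rintro ⟨p, C, hcl, hcov, hcard, hcount, ⟨f, hfinj, hfnot⟩, hp⟩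
    refine ⟨fun u w => ∃ t, f t = w ∧ u ∈ C t, ⟨?_, ?_, ?_⟩, ?_⟩
    · rintro v ⟨t, rfl, hv⟩; exact hfnot t hv
    · intro w
      by_cases h : ∃ t, f t = w
      · obtain ⟨t, ht⟩ := h
        have h1 : {u | ∃ t', f t' = w ∧ u ∈ C t'} = ↑(C t) := by
          ext u
          simp only [Set.mem_setOf_eq, Finset.coe_mem, Finset.mem_coe]
          constructor
          · rintro ⟨t', ht', hu⟩; rwa [hfinj (ht'.trans ht.symm)] at hu
          · intro hu; exact ⟨t, ht, hu⟩
        rw [h1, Set.ncard_coe_finset]; exact hcard t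
      · have h1 : {u | ∃ t', f t' = w ∧ u ∈ C t'} = ∅ := by
          ext u
          simp only [Set.mem_setOf_eq, Set.mem_empty_iff_false, iff_false]
          rintro ⟨t', ht', -⟩; exact h ⟨t', ht'⟩
        rw [h1]; simp
    · intro u
      have h1 : {w | ∃ t, f t = w ∧ u ∈ C t} = f '' {t | u ∈ C t} := by
        ext w
        constructor
        · rintro ⟨t, rfl, ht⟩; exact ⟨t, ht, rfl⟩
        · rintro ⟨t, ht, rfl⟩; exact ⟨t, rfl, ht⟩
      rw [h1, Set.ncard_image_of_injective _ hfinj]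
      exact hcount u
    · ext u v
      simp only [compGraph]
      constructor
      · rintro ⟨hne, w, ⟨t1, ht1, hu⟩, ⟨t2, ht2, hv⟩⟩
        have : t1 = t2 := hfinj (ht1.trans ht2.symm)
        subst this
        exact hcl t1 hu hv hne
      · intro h
        obtain ⟨t, hu, hv⟩ := hcov u v h
        exact ⟨h.ne, f t, ⟨t, rfl, hu⟩, ⟨t, rfl, hv⟩⟩
end

section
/- If G is the competition graph of a loopless digraph in which every vertex has indegree at most i and outdegree at most j, then |E(G)| ≤ (i−1)i/2 · |V(G)|. -/
theorem stmt1 {V : Type*} [Fintype V] (G : SimpleGraph V) (i j : ℕ)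
    (h : IsIJCompGraph G i j) :
    G.edgeSet.ncard ≤ (i - 1) * i / 2 * Fintype.card V := by
  classical
  obtain ⟨D, ⟨hloop, hin, hout⟩, hG⟩ := h
  subst hG
  rcases isEmpty_or_nonempty V with hV | hV
  · have : (compGraph D).edgeSet = ∅ := by
      ext e
      induction e using Sym2.ind with
      | _ u v => exact (hV.false u).elim
    simp [this]
  · inhabit V
    -- A total choice of common out-neighbor for each edge
    have hchoice : ∀ e : Sym2 V, e ∈ (compGraph D).edgeSet →
        ∃ w, ∀ x ∈ e, D x w := by
      intro e he
      induction e using Sym2.ind with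
      | _ u v =>
        rw [SimpleGraph.mem_edgeSet] at he
        obtain ⟨hne, w, h1, h2⟩ := he
        refine ⟨w, fun x hx => ?_⟩
        rw [Sym2.mem_iff] at hx
        rcases hx with rfl | rfl <;> assumption
    set f : Sym2 V → V := fun e =>
      if h : ∃ w, ∀ x ∈ e, D x w then h.choose else default with hfdef
    have hf : ∀ e ∈ (compGraph D).edgeSet, ∀ x ∈ e, D x (f e) := by
      intro e he x hx
      have h' := hchoice e he
      simp only [hfdef, dif_pos h']
      exact h'.choose_spec x hx
    -- Work with Finsets
    have hcard : (compGraph D).edgeSet.ncard = (compGraph D).edgeFinset.card := by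
      rw [Set.ncard_eq_toFinset_card', SimpleGraph.edgeFinset]
    rw [hcard]
    have key : (compGraph D).edgeFinset.card =
        ∑ w : V, ((compGraph D).edgeFinset.filter (fun e => f e = w)).card :=
      Finset.card_eq_sum_card_fiberwise (fun e _ => Finset.mem_univ (f e))
    rw [key]
    have fiber_bound : ∀ w : V,
        ((compGraph D).edgeFinset.filter (fun e => f e = w)).card ≤ (i - 1) * i / 2 := by
      intro w
      set N : Finset V := Finset.univ.filter (fun u => D u w) with hN
      have hNcard : N.card ≤ i := by
        have := hin w
        rwa [Set.ncard_eq_toFinset_card', Set.toFinset_setOf] at this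
      have hsub : ((compGraph D).edgeFinset.filter (fun e => f e = w)) ⊆
          N.offDiag.image Sym2.mk.uncurry := by
        intro e he
        rw [Finset.mem_filter] at he
        obtain ⟨he1, he2⟩ := he
        rw [SimpleGraph.mem_edgeFinset] at he1
        have hfe := hf e he1
        rw [he2] at hfe
        induction e using Sym2.ind with
        | _ u v =>
          rw [SimpleGraph.mem_edgeSet] at he1
          have hne : u ≠ v := he1.1
          have hu : D u w := hfe u (Sym2.mem_mk_left u v)
          have hv : D v w := hfe v (Sym2.mem_mk_right u v)
          refine Finset.mem_image.mpr ⟨(u, v), ?_, rfl⟩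
          rw [Finset.mem_offDiag]
          exact ⟨by simp [hN, hu], by simp [hN, hv], hne⟩
      calc ((compGraph D).edgeFinset.filter (fun e => f e = w)).card
          ≤ (N.offDiag.image Sym2.mk.uncurry).card := Finset.card_le_card hsub
        _ = N.card.choose 2 := Sym2.card_image_offDiag N
        _ ≤ i.choose 2 := Nat.choose_le_choose 2 hNcard
        _ = (i - 1) * i / 2 := by rw [Nat.choose_two_right, Nat.mul_comm]
    calc ∑ w : V, ((compGraph D).edgeFinset.filter (fun e => f e = w)).card
        ≤ ∑ _w : V, (i - 1) * i / 2 := Finset.sum_le_sum (fun w _ => fiber_bound w)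
      _ = (i - 1) * i / 2 * Fintype.card V := by
          simp [Finset.sum_const, mul_comm]
end

section
/- If G is the competition graph of a loopless digraph in which every vertex has indegree at most i and outdegree at most j, then G contains no induced subgraph isomorphic to the star K_{1,j+1}. -/
theorem stmt2 {V : Type*} [Fintype V] (G : SimpleGraph V) (i j : ℕ)
    (h : IsIJCompGraph G i j) :
    IsEmpty (completeBipartiteGraph (Fin 1) (Fin (j + 1)) ↪g G) := by
  classical
  constructor
  intro f
  obtain ⟨D, ⟨hl, hi, hj⟩, hG⟩ := h
  subst hG
  set c := f (Sum.inl 0) with hc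
  have hadj : ∀ k : Fin (j+1), (compGraph D).Adj c (f (Sum.inr k)) := by
    intro k
    exact f.map_adj_iff.2 (by simp [completeBipartiteGraph])
  choose w hw1 hw2 using fun k => (hadj k).2
  have hinj : Function.Injective w := by
    intro a b hab
    by_contra hne
    have hadj2 : (compGraph D).Adj (f (Sum.inr a)) (f (Sum.inr b)) := by
      refine ⟨?_, w a, hw2 a, hab ▸ hw2 b⟩
      intro h'
      exact hne (Sum.inr_injective (f.injective h'))
    have := f.map_adj_iff.1 hadj2
    simp [completeBipartiteGraph] at this
  have hsub : Set.range w ⊆ {x | D c x} := by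
    rintro _ ⟨k, rfl⟩; exact hw1 k
  have hfin : {x | D c x}.Finite := Set.toFinite _
  have h1 : (Set.range w).ncard = j + 1 := by
    simp [Set.ncard_eq_toFinset_card', Set.toFinset_range, Finset.card_image_of_injective _ hinj]
  have h2 := Set.ncard_le_ncard hsub hfin
  have h3 := hj c
  omega
end

section
/- For every integer n ≥ 3 and all integers i ≥ n−1 and j ≥ 2, the complete graph K_n is the competition graph of some loopless digraph on n vertices in which every vertex has indegree at most i and outdegree at most j. -/
theorem stmt4 (n i j : ℕ) (hn : 3 ≤ n) (hi : n - 1 ≤ i) (hj : 2 ≤ j) :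
    IsIJCompGraph (⊤ : SimpleGraph (Fin n)) i j := by
  have h0 : 0 < n := by omega
  have h1 : 1 < n := by omega
  have h2 : 2 < n := by omega
  set z0 : Fin n := ⟨0, h0⟩ with hz0
  set z1 : Fin n := ⟨1, h1⟩ with hz1
  set z2 : Fin n := ⟨2, h2⟩ with hz2
  have e01 : z0 ≠ z1 := by simp [hz0, hz1, Fin.ext_iff]
  have e02 : z0 ≠ z2 := by simp [hz0, hz2, Fin.ext_iff]
  have e12 : z1 ≠ z2 := by simp [hz1, hz2, Fin.ext_iff]
  refine ⟨fun u w => (w = z0 ∧ u ≠ z0) ∨ (w = z1 ∧ u ≠ z1) ∨ (w = z2 ∧ (u = z0 ∨ u = z1)),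
    ⟨?_, ?_, ?_⟩, ?_⟩
  · rintro v (⟨rfl, hv⟩ | ⟨rfl, hv⟩ | ⟨rfl, (h | h)⟩)
    · exact hv rfl
    · exact hv rfl
    · exact e02 h.symm
    · exact e12 h.symm
  · intro v
    rcases eq_or_ne v z0 with rfl | hv0
    · have hset : {u : Fin n | (z0 = z0 ∧ u ≠ z0) ∨ (z0 = z1 ∧ u ≠ z1) ∨
          (z0 = z2 ∧ (u = z0 ∨ u = z1))} = {z0}ᶜ := by
        ext u; simp [e01, e02]
      rw [hset]
      have := Set.ncard_add_ncard_compl ({z0} : Set (Fin n))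
      simp [Nat.card_eq_fintype_card] at this
      omega
    rcases eq_or_ne v z1 with rfl | hv1
    · have hset : {u : Fin n | (z1 = z0 ∧ u ≠ z0) ∨ (z1 = z1 ∧ u ≠ z1) ∨
          (z1 = z2 ∧ (u = z0 ∨ u = z1))} = {z1}ᶜ := by
        ext u; simp [e01.symm, e12]
      rw [hset]
      have := Set.ncard_add_ncard_compl ({z1} : Set (Fin n))
      simp [Nat.card_eq_fintype_card] at this
      omega
    rcases eq_or_ne v z2 with rfl | hv2
    · have hset : {u : Fin n | (z2 = z0 ∧ u ≠ z0) ∨ (z2 = z1 ∧ u ≠ z1) ∨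
          (z2 = z2 ∧ (u = z0 ∨ u = z1))} = {z0, z1} := by
        ext u; simp [e02.symm, e12.symm]
      rw [hset]
      calc ({z0, z1} : Set (Fin n)).ncard ≤ 2 := by
            apply le_trans (Set.ncard_insert_le _ _); simp
        _ ≤ i := by omega
    · have hset : {u : Fin n | (v = z0 ∧ u ≠ z0) ∨ (v = z1 ∧ u ≠ z1) ∨
          (v = z2 ∧ (u = z0 ∨ u = z1))} = ∅ := by
        ext u; simp [hv0, hv1, hv2]
      rw [hset]; simp
  · intro u
    have hsub : {w : Fin n | (w = z0 ∧ u ≠ z0) ∨ (w = z1 ∧ u ≠ z1) ∨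
        (w = z2 ∧ (u = z0 ∨ u = z1))} ⊆
        if u = z0 then {z1, z2} else if u = z1 then {z0, z2} else {z0, z1} := by
      intro w hw
      rcases eq_or_ne u z0 with rfl | hu0
      · simp only [if_pos rfl]
        rcases hw with ⟨rfl, h⟩ | ⟨rfl, _⟩ | ⟨rfl, _⟩
        · exact absurd rfl h
        · exact Set.mem_insert _ _
        · exact Set.mem_insert_of_mem _ rfl
      rcases eq_or_ne u z1 with rfl | hu1
      · simp only [if_neg hu0, if_pos rfl]
        rcases hw with ⟨rfl, _⟩ | ⟨rfl, h⟩ | ⟨rfl, _⟩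
        · exact Set.mem_insert _ _
        · exact absurd rfl h
        · exact Set.mem_insert_of_mem _ rfl
      · simp only [if_neg hu0, if_neg hu1]
        rcases hw with ⟨rfl, _⟩ | ⟨rfl, _⟩ | ⟨rfl, (h | h)⟩
        · exact Set.mem_insert _ _
        · exact Set.mem_insert_of_mem _ rfl
        · exact absurd h hu0
        · exact absurd h hu1
    have hcard : ∀ a b : Fin n, ({a, b} : Set (Fin n)).ncard ≤ 2 := by
      intro a b
      apply le_trans (Set.ncard_insert_le _ _); simp
    calc {w : Fin n | (w = z0 ∧ u ≠ z0) ∨ (w = z1 ∧ u ≠ z1) ∨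
        (w = z2 ∧ (u = z0 ∨ u = z1))}.ncard
        ≤ (if u = z0 then ({z1, z2} : Set (Fin n)) else if u = z1 then {z0, z2}
            else {z0, z1}).ncard := Set.ncard_le_ncard hsub (Set.toFinite _)
      _ ≤ 2 := by split_ifs <;> apply hcard
      _ ≤ j := hj
  · ext u v
    simp only [compGraph, SimpleGraph.top_adj]
    constructor
    · rintro ⟨h, -⟩; exact h
    · intro huv
      refine ⟨huv, ?_⟩
      rcases eq_or_ne u z0 with rfl | hu0
      · rcases eq_or_ne v z1 with rfl | hv1
        · exact ⟨z2, Or.inr (Or.inr ⟨rfl, Or.inl rfl⟩), Or.inr (Or.inr ⟨rfl, Or.inr rfl⟩)⟩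
        · exact ⟨z1, Or.inr (Or.inl ⟨rfl, e01⟩), Or.inr (Or.inl ⟨rfl, hv1⟩)⟩
      rcases eq_or_ne v z0 with rfl | hv0
      · rcases eq_or_ne u z1 with rfl | hu1
        · exact ⟨z2, Or.inr (Or.inr ⟨rfl, Or.inr rfl⟩), Or.inr (Or.inr ⟨rfl, Or.inl rfl⟩)⟩
        · exact ⟨z1, Or.inr (Or.inl ⟨rfl, hu1⟩), Or.inr (Or.inl ⟨rfl, e01⟩)⟩
      · exact ⟨z0, Or.inl ⟨rfl, hu0⟩, Or.inl ⟨rfl, hv0⟩⟩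
end

section
/- A graph G is an ⟨i,j⟩ competition graph for positive integers i and j if and only if (i) G is not isomorphic to K_2, (ii) if j = 1 then G is not a nontrivial complete graph, and (iii) there exists an edge clique cover {C_1,...,C_p} of G with |C_t| ≤ i for each t, each vertex in at most j of the cliques, and p ≤ |V(G)|. -/
section Aux
open Finset

lemma ncard_le_cardV {V : Type*} [Fintype V] (s : Set V) : s.ncard ≤ Fintype.card V := by
  have := Set.ncard_le_ncard (Set.subset_univ s) Set.finite_univ
  rwa [Set.ncard_univ, Nat.card_eq_fintype_card] at this

lemma comp_of_top {V : Type*} [Fintype V] (G : SimpleGraph V) {i j : ℕ}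
    (hG : G = ⊤) (h3 : 3 ≤ Fintype.card V) (hi : Fintype.card V ≤ i) (hj : 2 ≤ j) :
    IsIJCompGraph G i j := by
  classical
  obtain ⟨v1, v2, h12⟩ := Fintype.exists_pair_of_one_lt_card (α := V) (by omega)
  obtain ⟨v3, hv3⟩ : ∃ v3 : V, v3 ∉ ({v1, v2} : Finset V) := by
    by_contra h
    push_neg at h
    have : (Finset.univ : Finset V) ⊆ {v1, v2} := fun x _ => h x
    have := Finset.card_le_card this
    have h2 : ({v1, v2} : Finset V).card ≤ 2 := le_trans (Finset.card_insert_le _ _) (by simp)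
    rw [Finset.card_univ] at this
    omega
  have h13 : v1 ≠ v3 := fun h => hv3 (by rw [← h]; simp)
  have h23 : v2 ≠ v3 := fun h => hv3 (by rw [← h]; simp)
  set D : V → V → Prop :=
    fun u v => (v = v1 ∧ u ≠ v1) ∨ (v = v2 ∧ u ≠ v2) ∨ (v = v3 ∧ (u = v1 ∨ u = v2))
    with hD
  refine ⟨D, ⟨?_, ?_, ?_⟩, ?_⟩
  · rintro v (⟨rfl, h⟩ | ⟨rfl, h⟩ | ⟨rfl, h⟩)
    · exact h rfl
    · exact h rfl
    · rcases h with rfl | rfl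
      · exact h13 rfl
      · exact h23 rfl
  · intro v
    exact (ncard_le_cardV _).trans hi
  · intro u
    have hsub : ∀ (a b : V), {w | D u w} ⊆ {a, b} → {w | D u w}.ncard ≤ j := by
      intro a b hsub
      refine le_trans (Set.ncard_le_ncard hsub (Set.toFinite _)) (le_trans ?_ hj)
      refine le_trans (Set.ncard_insert_le _ _) ?_
      simp [Set.ncard_singleton]
    by_cases hu1 : u = v1
    · refine hsub v2 v3 ?_
      rintro w (⟨rfl, h⟩ | ⟨rfl, h⟩ | ⟨rfl, h⟩)
      · exact absurd hu1 h
      · simp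
      · simp
    · by_cases hu2 : u = v2
      · refine hsub v1 v3 ?_
        rintro w (⟨rfl, h⟩ | ⟨rfl, h⟩ | ⟨rfl, h⟩)
        · simp
        · exact absurd hu2 h
        · simp
      · refine hsub v1 v2 ?_
        rintro w (⟨rfl, h⟩ | ⟨rfl, h⟩ | ⟨rfl, h⟩)
        · simp
        · simp
        · rcases h with rfl | rfl
          · exact absurd rfl hu1
          · exact absurd rfl hu2
  · rw [hG]
    ext u v
    simp only [SimpleGraph.top_adj]
    show (u ≠ v ∧ ∃ w, D u w ∧ D v w) ↔ u ≠ v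
    constructor
    · exact fun h => h.1
    · intro hne
      refine ⟨hne, ?_⟩
      by_cases hu1 : u = v1
      · subst hu1
        by_cases hv2 : v = v2
        · subst hv2
          exact ⟨v3, Or.inr (Or.inr ⟨rfl, Or.inl rfl⟩), Or.inr (Or.inr ⟨rfl, Or.inr rfl⟩)⟩
        · exact ⟨v2, Or.inr (Or.inl ⟨rfl, h12⟩), Or.inr (Or.inl ⟨rfl, hv2⟩)⟩
      · by_cases hv1 : v = v1
        · subst hv1
          by_cases hu2 : u = v2
          · subst hu2
            exact ⟨v3, Or.inr (Or.inr ⟨rfl, Or.inr rfl⟩), Or.inr (Or.inr ⟨rfl, Or.inl rfl⟩)⟩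
          · exact ⟨v2, Or.inr (Or.inl ⟨rfl, hu2⟩), Or.inr (Or.inl ⟨rfl, h12⟩)⟩
        · exact ⟨v1, Or.inl ⟨rfl, hu1⟩, Or.inl ⟨rfl, hv1⟩⟩

lemma exists_minimal_cover_aux {V : Type*} [Fintype V] [DecidableEq V] (G : SimpleGraph V)
    {p : ℕ} (N : ℕ) :
    ∀ C : Fin p → Finset V, (∑ t, (C t).card) ≤ N →
      (∀ u v, G.Adj u v → ∃ t, u ∈ C t ∧ v ∈ C t) →
      ∃ C' : Fin p → Finset V, (∀ t, C' t ⊆ C t) ∧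
        (∀ u v, G.Adj u v → ∃ t, u ∈ C' t ∧ v ∈ C' t) ∧
        (∀ t, ∀ u ∈ C' t, ∃ y ∈ C' t, y ≠ u ∧ ∀ t', u ∈ C' t' → y ∈ C' t' → t' = t) := by
  induction N with
  | zero =>
    intro C hN hcov
    refine ⟨C, fun t => subset_rfl, hcov, ?_⟩
    intro t u hu
    exfalso
    have hle : (C t).card ≤ ∑ s, (C s).card := by
      simpa using Finset.single_le_sum (f := fun s => (C s).card)
        (fun s _ => Nat.zero_le _) (mem_univ t)
    have h0 : (C t).card = 0 := by omega
    rw [Finset.card_eq_zero] at h0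
    simp [h0] at hu
  | succ n ih =>
    intro C hN hcov
    by_cases hmin : ∀ t, ∀ u ∈ C t, ∃ y ∈ C t, y ≠ u ∧ ∀ t', u ∈ C t' → y ∈ C t' → t' = t
    · exact ⟨C, fun t => subset_rfl, hcov, hmin⟩
    · push_neg at hmin
      obtain ⟨t0, u0, hu0, hbad⟩ := hmin
      set C₂ : Fin p → Finset V := Function.update C t0 ((C t0).erase u0) with hC₂def
      have hC₂t : C₂ t0 = (C t0).erase u0 := Function.update_self t0 _ C
      have hC₂s : ∀ s, s ≠ t0 → C₂ s = C s := fun s hs => Function.update_of_ne hs _ C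
      have hsub : ∀ s, C₂ s ⊆ C s := by
        intro s
        rcases eq_or_ne s t0 with hs | hs
        · rw [hs, hC₂t]; exact erase_subset _ _
        · rw [hC₂s s hs]
      have hcov2 : ∀ a b, G.Adj a b → ∃ s, a ∈ C₂ s ∧ b ∈ C₂ s := by
        intro a b hab
        obtain ⟨s, ha, hb⟩ := hcov a b hab
        rcases eq_or_ne s t0 with hs | hs
        · rw [hs] at ha hb
          by_cases hau : a = u0
          · have hbu : b ≠ u0 := by rw [hau] at hab; exact hab.ne'
            obtain ⟨t', hat', hbt', htt'⟩ := hbad b hb hbu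
            rw [hau]
            exact ⟨t', by rw [hC₂s t' htt']; exact hat', by rw [hC₂s t' htt']; exact hbt'⟩
          · by_cases hbu : b = u0
            · have hab' : a ≠ u0 := hau
              obtain ⟨t', hbt', hat', htt'⟩ := hbad a ha hab'
              rw [hbu]
              exact ⟨t', by rw [hC₂s t' htt']; exact hat', by rw [hC₂s t' htt']; exact hbt'⟩
            · exact ⟨t0, by rw [hC₂t]; exact mem_erase.mpr ⟨hau, ha⟩,
                by rw [hC₂t]; exact mem_erase.mpr ⟨hbu, hb⟩⟩
        · exact ⟨s, by rw [hC₂s s hs]; exact ha, by rw [hC₂s s hs]; exact hb⟩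
      have hsum : (∑ s, (C₂ s).card) ≤ n := by
        have h2 : (C₂ t0).card + 1 = (C t0).card := by
          rw [hC₂t, Finset.card_erase_of_mem hu0]
          have : 1 ≤ (C t0).card := Finset.card_pos.mpr ⟨u0, hu0⟩
          omega
        have e1 : ∑ s, (C s).card = (C t0).card + ∑ s ∈ univ.erase t0, (C s).card :=
          (Finset.add_sum_erase univ _ (mem_univ t0)).symm
        have e2 : ∑ s, (C₂ s).card = (C₂ t0).card + ∑ s ∈ univ.erase t0, (C₂ s).card :=
          (Finset.add_sum_erase univ _ (mem_univ t0)).symm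
        have e3 : ∑ s ∈ univ.erase t0, (C₂ s).card = ∑ s ∈ univ.erase t0, (C s).card :=
          Finset.sum_congr rfl fun s hs => by rw [hC₂s s (Finset.ne_of_mem_erase hs)]
        omega
      obtain ⟨C', h1, h2, h3⟩ := ih C₂ hsum hcov2
      exact ⟨C', fun s => (h1 s).trans (hsub s), h2, h3⟩

lemma comp_of_SDR {V : Type*} [Fintype V] (G : SimpleGraph V) {i j p : ℕ}
    (C : Fin p → Finset V) (f : Fin p → V)
    (hf : Function.Injective f) (hfn : ∀ t, f t ∉ C t)
    (hclique : ∀ t, G.IsClique (C t : Set V))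
    (hcov : ∀ u v, G.Adj u v → ∃ t, u ∈ C t ∧ v ∈ C t)
    (hsize : ∀ t, (C t).card ≤ i)
    (hmult : ∀ v : V, ({t | v ∈ C t} : Set (Fin p)).ncard ≤ j) :
    IsIJCompGraph G i j := by
  classical
  refine ⟨fun u v => ∃ t, v = f t ∧ u ∈ C t, ⟨?_, ?_, ?_⟩, ?_⟩
  · rintro v ⟨t, rfl, hmem⟩
    exact hfn t hmem
  · intro v
    by_cases h : ∃ t, v = f t
    · obtain ⟨t, rfl⟩ := h
      have hset : {u | ∃ s, f t = f s ∧ u ∈ C s} = (C t : Set V) := by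
        ext u
        constructor
        · rintro ⟨s, hs, hu⟩
          rw [← hf hs] at hu
          exact hu
        · intro hu
          exact ⟨t, rfl, hu⟩
      rw [hset, Set.ncard_coe_finset]
      exact hsize t
    · have hset : {u | ∃ s, v = f s ∧ u ∈ C s} = (∅ : Set V) := by
        ext u
        simp only [Set.mem_setOf_eq, Set.mem_empty_iff_false, iff_false, not_exists]
        rintro s ⟨hs, -⟩
        exact h ⟨s, hs⟩
      simp [hset]
  · intro u
    have hset : {w | ∃ s, w = f s ∧ u ∈ C s} = f '' {s | u ∈ C s} := by
      ext w
      simp only [Set.mem_setOf_eq, Set.mem_image]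
      constructor
      · rintro ⟨s, rfl, hu⟩; exact ⟨s, hu, rfl⟩
      · rintro ⟨s, hu, rfl⟩; exact ⟨s, rfl, hu⟩
    rw [hset, Set.ncard_image_of_injective _ hf]
    exact hmult u
  · ext u v
    show (u ≠ v ∧ ∃ w, _ ∧ _) ↔ G.Adj u v
    constructor
    · rintro ⟨hne, w, ⟨t, rfl, hu⟩, ⟨s, hts, hv⟩⟩
      rw [← hf hts] at hv
      exact hclique t hu hv hne
    · intro h
      obtain ⟨t, hu, hv⟩ := hcov u v h
      exact ⟨h.ne, f t, ⟨t, rfl, hu⟩, ⟨t, rfl, hv⟩⟩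

lemma stmt7_mp {V : Type*} [Fintype V] (G : SimpleGraph V) (i j : ℕ)
    (H : IsIJCompGraph G i j) :
      (¬ Nonempty (G ≃g (⊤ : SimpleGraph (Fin 2)))) ∧
      (j = 1 → ¬ (G = ⊤ ∧ 2 ≤ Fintype.card V)) ∧
      (∃ (p : ℕ) (C : Fin p → Finset V),
        (∀ t, G.IsClique (C t : Set V)) ∧
        (∀ u v, G.Adj u v → ∃ t, u ∈ C t ∧ v ∈ C t) ∧
        (∀ t, (C t).card ≤ i) ∧
        (∀ v : V, ({t | v ∈ C t} : Set (Fin p)).ncard ≤ j) ∧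
        p ≤ Fintype.card V) := by
  classical
  obtain ⟨D, ⟨hloop, hin, hout⟩, rfl⟩ := H
  have hcard1 : ∀ (u : V), {x | D u x}.ncard ≤ 1 → ∀ y w, D u y → D u w → y = w := by
    intro u h y w hy hw
    exact (Set.ncard_le_one (Set.toFinite _)).mp h y hy w hw
  refine ⟨?_, ?_, ?_⟩
  · rintro ⟨e⟩
    have hcard : Fintype.card V = 2 := by
      rw [← Fintype.card_fin 2]
      exact Fintype.card_congr e.toEquiv
    have hab : (compGraph D).Adj (e.symm 0) (e.symm 1) :=
      e.symm.map_adj_iff.mpr (by simp)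
    obtain ⟨hne, w, hw1, hw2⟩ := hab
    have hw : w = e.symm 0 ∨ w = e.symm 1 := by
      have h2 : ∀ x : Fin 2, x = 0 ∨ x = 1 := by decide
      rcases h2 (e w) with h | h
      · left; rw [← h]; simp
      · right; rw [← h]; simp
    rcases hw with h | h
    · rw [← h] at hw1; exact hloop w hw1
    · rw [← h] at hw2; exact hloop w hw2
  · intro hj1
    rintro ⟨htop, hcard⟩
    obtain ⟨u, v, huv⟩ := Fintype.exists_pair_of_one_lt_card (α := V) (by omega)
    have hadj : ∀ a b : V, a ≠ b → (compGraph D).Adj a b := by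
      intro a b h
      rw [htop]
      exact h
    obtain ⟨-, w, hw1, hw2⟩ := hadj u v huv
    by_cases hwu : w = u
    · subst hwu
      have hwv : w ≠ v := huv
      obtain ⟨-, y, hy1, hy2⟩ := hadj v w (Ne.symm hwv)
      have : y = w := hcard1 v (hj1 ▸ hout v) y w hy1 hw2
      rw [this] at hy2
      exact hloop w hy2
    · obtain ⟨-, y, hy1, hy2⟩ := hadj u w (fun h => hwu h.symm)
      have : y = w := hcard1 u (hj1 ▸ hout u) y w hy1 hw1
      rw [this] at hy2
      exact hloop w hy2
  · set n := Fintype.card V with hn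
    set e : Fin n ≃ V := (Fintype.equivFin V).symm with he
    refine ⟨n, fun t => Finset.univ.filter (fun u => D u (e t)), ?_, ?_, ?_, ?_, le_refl _⟩
    · intro t u hu v hv hne
      simp only [Finset.coe_filter, Set.mem_setOf_eq, Finset.mem_univ, true_and] at hu hv
      exact ⟨hne, e t, hu, hv⟩
    · rintro u v ⟨hne, w, h1, h2⟩
      refine ⟨e.symm w, ?_, ?_⟩ <;> simp [h1, h2]
    · intro t
      have hset : {u | D u (e t)} = ↑(Finset.univ.filter (fun u => D u (e t))) := by
        ext u; simp
      have := hin (e t)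
      rw [hset, Set.ncard_coe_finset] at this
      exact this
    · intro v
      have hset : {t | v ∈ Finset.univ.filter (fun u => D u (e t))} = {t | D v (e t)} := by
        ext t; simp
      rw [hset]
      have himg : e '' {t | D v (e t)} = {w | D v w} := by
        ext w
        simp only [Set.mem_image, Set.mem_setOf_eq]
        constructor
        · rintro ⟨t, ht, rfl⟩; exact ht
        · intro h; exact ⟨e.symm w, by simpa using h, by simp⟩
      have := Set.ncard_image_of_injective {t | D v (e t)} e.injective
      rw [himg] at this
      rw [← this]
      exact hout v

lemma stmt7_mpr {V : Type*} [Fintype V] (G : SimpleGraph V) (i j : ℕ)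
    (hi : 1 ≤ i) (hj : 1 ≤ j)
    (h1 : ¬ Nonempty (G ≃g (⊤ : SimpleGraph (Fin 2))))
    (h2 : j = 1 → ¬ (G = ⊤ ∧ 2 ≤ Fintype.card V))
    (h3 : ∃ (p : ℕ) (C : Fin p → Finset V),
        (∀ t, G.IsClique (C t : Set V)) ∧
        (∀ u v, G.Adj u v → ∃ t, u ∈ C t ∧ v ∈ C t) ∧
        (∀ t, (C t).card ≤ i) ∧
        (∀ v : V, ({t | v ∈ C t} : Set (Fin p)).ncard ≤ j) ∧
        p ≤ Fintype.card V) :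
    IsIJCompGraph G i j := by
  classical
  obtain ⟨p, C, hclique, hcov, hsize, hmult, hp⟩ := h3
  by_cases hE : ∃ u v, G.Adj u v
  swap
  · push_neg at hE
    refine ⟨fun _ _ => False, ⟨fun v h => h, fun v => ?_, fun u => ?_⟩, ?_⟩
    · simp only [Set.setOf_false, Set.ncard_empty]; omega
    · simp only [Set.setOf_false, Set.ncard_empty]; omega
    · ext u v
      show (u ≠ v ∧ ∃ w, False ∧ False) ↔ G.Adj u v
      constructor
      · rintro ⟨-, w, h, -⟩; exact h.elim
      · intro h; exact absurd h (hE u v)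
  obtain ⟨a, b, hab⟩ := hE
  -- at least 3 vertices
  have hV3 : 3 ≤ Fintype.card V := by
    by_contra hlt
    push_neg at hlt
    have hV2 : Fintype.card V = 2 := by
      have : ({a, b} : Finset V).card ≤ Fintype.card V := Finset.card_le_univ _
      rw [Finset.card_insert_of_notMem (by simpa using hab.ne), Finset.card_singleton] at this
      omega
    have huniv : ({a, b} : Finset V) = Finset.univ := by
      apply Finset.eq_univ_of_card
      rw [Finset.card_insert_of_notMem (by simpa using hab.ne), Finset.card_singleton, hV2]
    have hall : ∀ v : V, v = a ∨ v = b := by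
      intro v
      have : v ∈ ({a, b} : Finset V) := huniv ▸ Finset.mem_univ v
      simpa using this
    have hadj : ∀ u v : V, u ≠ v → G.Adj u v := by
      intro u v huv
      rcases hall u with rfl | rfl <;> rcases hall v with rfl | rfl
      · exact absurd rfl huv
      · exact hab
      · exact hab.symm
      · exact absurd rfl huv
    refine h1 ⟨⟨Fintype.equivFinOfCardEq hV2, ?_⟩⟩
    intro u v
    simp only [SimpleGraph.top_adj]
    constructor
    · intro h
      exact hadj u v (fun q => h (by rw [q]))
    · intro h
      exact fun q => h.ne ((Fintype.equivFinOfCardEq hV2).injective q)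
  -- minimize the cover
  obtain ⟨C', hsub, hcov', hmin⟩ :=
    exists_minimal_cover_aux G (∑ t, (C t).card) C (le_refl _) hcov
  have hclique' : ∀ t, G.IsClique (C' t : Set V) := fun t =>
    (hclique t).subset (Finset.coe_subset.mpr (hsub t))
  have hsize' : ∀ t, (C' t).card ≤ i := fun t =>
    le_trans (Finset.card_le_card (hsub t)) (hsize t)
  have hmult' : ∀ v : V, ({t | v ∈ C' t} : Set (Fin p)).ncard ≤ j := by
    intro v
    refine le_trans (Set.ncard_le_ncard ?_ (Set.toFinite _)) (hmult v)
    intro t ht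
    exact hsub t ht
  by_cases hU : ∃ t0, C' t0 = Finset.univ
  · -- complete graph case
    obtain ⟨t0, ht0⟩ := hU
    have hGtop : G = ⊤ := by
      ext u v
      simp only [SimpleGraph.top_adj]
      constructor
      · exact fun h => h.ne
      · intro hne
        exact hclique' t0 (by simp [ht0]) (by simp [ht0]) hne
    have hitop : Fintype.card V ≤ i := by
      have := hsize' t0
      rwa [ht0, Finset.card_univ] at this
    have hj2 : 2 ≤ j := by
      rcases Nat.lt_or_ge j 2 with h | h
      · have hj1 : j = 1 := by omega
        exact absurd ⟨hGtop, by omega⟩ (h2 hj1)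
      · exact h
    exact comp_of_top G hGtop hV3 hitop hj2
  · -- Hall's theorem case
    push_neg at hU
    set A : Fin p → Finset V := fun t => if C' t = ∅ then Finset.univ else (C' t)ᶜ with hA
    have hall : ∀ s : Finset (Fin p), s.card ≤ (s.biUnion A).card := by
      intro s
      by_cases hne : ∀ t ∈ s, C' t ≠ ∅
      swap
      · push_neg at hne
        obtain ⟨t, hts, hempty⟩ := hne
        have : Finset.univ ⊆ s.biUnion A := by
          have : A t = Finset.univ := by rw [hA]; simp [hempty]
          rw [← this]
          exact Finset.subset_biUnion_of_mem A hts
        have hcardb : Fintype.card V ≤ (s.biUnion A).card := by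
          rw [← Finset.card_univ]
          exact Finset.card_le_card this
        have : s.card ≤ p := by simpa using Finset.card_le_univ s
        omega
      · by_contra hlt
        push_neg at hlt
        -- a vertex in all the cliques of s
        have hbne : s.biUnion A ≠ Finset.univ := by
          intro h
          rw [h, Finset.card_univ] at hlt
          have : s.card ≤ p := by simpa using Finset.card_le_univ s
          omega
        obtain ⟨u, hu⟩ : ∃ u, u ∉ s.biUnion A := by
          by_contra h
          push_neg at h
          exact hbne (Finset.eq_univ_of_forall h)
        have hu' : ∀ t ∈ s, u ∈ C' t := by
          intro t ht
          by_contra h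
          apply hu
          refine Finset.mem_biUnion.mpr ⟨t, ht, ?_⟩
          have hAt : A t = (C' t)ᶜ := by simp [hA, hne t ht]
          rw [hAt]
          exact Finset.mem_compl.mpr h
        rcases Nat.lt_or_ge s.card 2 with hs2 | hs2
        · -- singleton violating set : clique is univ
          have hs1 : s.card = 1 := by
            rcases Nat.eq_zero_or_pos s.card with h0 | h0
            · rw [h0] at hlt; omega
            · omega
          obtain ⟨t, hts⟩ := Finset.card_eq_one.mp hs1
          rw [hts] at hlt
          rw [Finset.singleton_biUnion] at hlt
          have hAt : A t = (C' t)ᶜ := by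
            rw [hA]
            have : C' t ≠ ∅ := hne t (by rw [hts]; simp)
            simp [this]
          rw [hAt, Finset.card_singleton] at hlt
          have : (C' t)ᶜ = ∅ := Finset.card_eq_zero.mp (by omega)
          have : C' t = Finset.univ := by
            rwa [Finset.compl_eq_empty_iff] at this
          exact hU t this
        · -- at least two cliques: use minimality witnesses
          have key : ∀ t ∈ s, ∃ yv, yv ∈ C' t ∧ yv ≠ u ∧
              ∀ t', u ∈ C' t' → yv ∈ C' t' → t' = t := by
            intro t ht
            obtain ⟨y, hy1, hy2, hy3⟩ := hmin t u (hu' t ht)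
            exact ⟨y, hy1, hy2, hy3⟩
          choose y hy1 hy2 hy3 using key
          set Y : Fin p → V := fun t => if ht : t ∈ s then y t ht else u with hY
          have maps : ∀ t ∈ s, Y t ∈ s.biUnion A := by
            intro t ht
            obtain ⟨t'', ht''s, ht''ne⟩ := Finset.exists_mem_ne (s := s) (by omega) t
            refine Finset.mem_biUnion.mpr ⟨t'', ht''s, ?_⟩
            have hYt : Y t = y t ht := by rw [hY]; simp [ht]
            have hnotin : Y t ∉ C' t'' := by
              rw [hYt]
              intro hmem
              exact ht''ne (hy3 t ht t'' (hu' t'' ht''s) hmem)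
            have hAt : A t'' = (C' t'')ᶜ := by simp [hA, hne t'' ht''s]
            rw [hAt]
            exact Finset.mem_compl.mpr hnotin
          obtain ⟨t1, ht1, t2, ht2, hne12, heq⟩ :=
            Finset.exists_ne_map_eq_of_card_lt_of_maps_to hlt maps
          have hY1 : Y t1 = y t1 ht1 := by rw [hY]; simp [ht1]
          have hY2 : Y t2 = y t2 ht2 := by rw [hY]; simp [ht2]
          rw [hY1, hY2] at heq
          have : y t1 ht1 ∈ C' t2 := heq ▸ hy1 t2 ht2
          exact hne12 (hy3 t1 ht1 t2 (hu' t2 ht2) this).symm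
    obtain ⟨f, hfinj, hfA⟩ := (Finset.all_card_le_biUnion_card_iff_exists_injective A).mp hall
    have hfn : ∀ t, f t ∉ C' t := by
      intro t hmem
      have hne : C' t ≠ ∅ := Finset.ne_empty_of_mem hmem
      have hAt : A t = (C' t)ᶜ := by simp [hA, hne]
      have := hfA t
      rw [hAt] at this
      exact Finset.mem_compl.mp this hmem
    exact comp_of_SDR G C' f hfinj hfn hclique' hcov' hsize' hmult'

end Aux

theorem stmt7 {V : Type*} [Fintype V] (G : SimpleGraph V) (i j : ℕ)
    (hi : 1 ≤ i) (hj : 1 ≤ j) :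
    IsIJCompGraph G i j ↔
      (¬ Nonempty (G ≃g (⊤ : SimpleGraph (Fin 2)))) ∧
      (j = 1 → ¬ (G = ⊤ ∧ 2 ≤ Fintype.card V)) ∧
      (∃ (p : ℕ) (C : Fin p → Finset V),
        (∀ t, G.IsClique (C t : Set V)) ∧
        (∀ u v, G.Adj u v → ∃ t, u ∈ C t ∧ v ∈ C t) ∧
        (∀ t, (C t).card ≤ i) ∧
        (∀ v : V, ({t | v ∈ C t} : Set (Fin p)).ncard ≤ j) ∧
        p ≤ Fintype.card V) := by
  constructor
  · exact fun H => stmt7_mp G i j H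
  · exact fun ⟨h1, h2, h3⟩ => stmt7_mpr G i j hi hj h1 h2 h3
end

section
/- If G is the competition graph of a loopless digraph in which every vertex has indegree at most i and outdegree at most j, then the clique number of G satisfies ω(G) ≤ ij − j + 1 = j(i−1)+1. -/
theorem stmt8 {V : Type*} [Fintype V] (G : SimpleGraph V) (i j : ℕ)
    (hi : 1 ≤ i) (hj : 1 ≤ j) (h : IsIJCompGraph G i j) :
    G.cliqueNum ≤ i * j - j + 1 := by
  classical
  obtain ⟨D, ⟨hloop, hin, hout⟩, hGD⟩ := h
  obtain ⟨s, hs⟩ := G.exists_isNClique_cliqueNum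
  rw [← hs.card_eq]
  rcases Finset.eq_empty_or_nonempty s with rfl | ⟨u, hu⟩
  · simp
  -- the common out-neighbor function
  have hadj : ∀ v ∈ s, v ≠ u → ∃ w, D u w ∧ D v w := by
    intro v hv hvu
    have := hs.isClique hv hu hvu
    rw [← hGD] at this
    obtain ⟨-, w, h1, h2⟩ := this.symm
    exact ⟨w, h1, h2⟩
  set f : V → V := fun v =>
    if hv : ∃ w, D u w ∧ D v w then hv.choose else u with hf
  -- finset of out-neighbors of u
  set t : Finset V := Finset.univ.filter (fun w => D u w) with ht
  have htcard : t.card ≤ j := by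
    have := hout u
    rwa [Set.ncard_eq_toFinset_card', show {w | D u w}.toFinset = t by
      ext w; simp [ht]] at this
  have key : (s.erase u).card ≤ (i - 1) * t.card := by
    apply Finset.card_le_mul_card_image_of_maps_to (f := f)
    · intro v hv
      obtain ⟨hvu, hvs⟩ := Finset.mem_erase.mp hv
      obtain ⟨w, hw⟩ := hadj v hvs hvu
      have hex : ∃ w, D u w ∧ D v w := ⟨w, hw⟩
      simp only [hf, dif_pos hex, ht, Finset.mem_filter, Finset.mem_univ, true_and]
      exact hex.choose_spec.1
    · intro w hw
      have hsub : (s.erase u).filter (fun v => f v = w) ⊆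
          ({x | D x w}.toFinset.erase u) := by
        intro v hv
        simp only [Finset.mem_filter, Finset.mem_erase] at hv
        obtain ⟨⟨hvu, hvs⟩, hfv⟩ := hv
        have hex : ∃ w', D u w' ∧ D v w' := hadj v hvs hvu
        have : D v (f v) := by
          simp only [hf, dif_pos hex]
          exact hex.choose_spec.2
        rw [hfv] at this
        simp only [Finset.mem_erase, Set.mem_toFinset]
        exact ⟨hvu, this⟩
      calc ((s.erase u).filter (fun v => f v = w)).card
          ≤ ({x | D x w}.toFinset.erase u).card := Finset.card_le_card hsub
        _ ≤ {x | D x w}.toFinset.card - 1 := by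
            apply Nat.le_sub_one_of_lt
            apply Finset.card_erase_lt_of_mem
            simp only [Set.mem_toFinset, Set.mem_setOf_eq]
            simpa [ht] using hw
        _ ≤ i - 1 := by
            apply Nat.sub_le_sub_right
            have := hin w
            rwa [Set.ncard_eq_toFinset_card'] at this
  have hscard : s.card = (s.erase u).card + 1 := by
    rw [Finset.card_erase_of_mem hu]
    have : 0 < s.card := Finset.card_pos.mpr ⟨u, hu⟩
    omega
  have hfin : s.card ≤ (i - 1) * j + 1 := by
    rw [hscard]
    exact Nat.add_le_add_right (key.trans (Nat.mul_le_mul_left _ htcard)) 1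
  have heq : (i - 1) * j = i * j - j := by
    cases i with
    | zero => omega
    | succ n => simp [Nat.succ_mul]
  rw [← heq]
  exact hfin
end

section
/- For every positive integer j, there exists a ⟨2,j⟩ competition graph with clique number exactly j+1. -/
section Aux

variable (j : ℕ)

/-- number of vertices: j+1 predators then (j+1)^2 prey slots -/
def nV : ℕ := (j + 1) + (j + 1) * (j + 1)

/-- predator embedding -/
def emb (a : Fin (j + 1)) : Fin (nV j) :=
  ⟨a.val, by have := a.isLt; unfold nV; omega⟩

/-- prey encoding for pair (a,b) -/
def enc (a b : Fin (j + 1)) : Fin (nV j) :=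
  ⟨(j + 1) + a.val * (j + 1) + b.val, by
    have ha := a.isLt; have hb := b.isLt
    unfold nV
    nlinarith⟩

lemma enc_inj {a b a' b' : Fin (j + 1)} (h : enc j a b = enc j a' b') :
    a = a' ∧ b = b' := by
  have hval := congrArg Fin.val h
  simp only [enc] at hval
  have ha := a.isLt; have hb := b.isLt; have ha' := a'.isLt; have hb' := b'.isLt
  have e1 : (j + 1) * a.val + b.val = (j + 1) * a'.val + b'.val := by
    have c1 := mul_comm a.val (j + 1)
    have c2 := mul_comm a'.val (j + 1)
    linarith
  have hbv : b.val = b'.val := by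
    have := congrArg (· % (j + 1)) e1
    simpa [Nat.mul_add_mod, Nat.mod_eq_of_lt hb, Nat.mod_eq_of_lt hb'] using this
  have hav : a.val = a'.val := by
    have := congrArg (· / (j + 1)) e1
    simpa [Nat.mul_add_div (show 0 < j + 1 by omega), Nat.div_eq_of_lt hb,
      Nat.div_eq_of_lt hb'] using this
  exact ⟨Fin.ext hav, Fin.ext hbv⟩

/-- the digraph: predator a and b both eat prey (a,b) for a < b -/
def Dg : Fin (nV j) → Fin (nV j) → Prop := fun u w =>
  ∃ a b : Fin (j + 1), a < b ∧ w = enc j a b ∧ (u = emb j a ∨ u = emb j b)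

lemma emb_val_lt (a : Fin (j + 1)) : (emb j a).val < j + 1 := a.isLt

lemma enc_val_ge (a b : Fin (j + 1)) : j + 1 ≤ (enc j a b).val := by
  simp [enc]; omega

lemma adj_iff (u v : Fin (nV j)) :
    (compGraph (Dg j)).Adj u v ↔ u ≠ v ∧ u.val < j + 1 ∧ v.val < j + 1 := by
  constructor
  · rintro ⟨hne, w, ⟨a, b, _, _, hu⟩, ⟨a', b', _, _, hv⟩⟩
    refine ⟨hne, ?_, ?_⟩
    · rcases hu with h | h <;> subst h <;> exact emb_val_lt j _
    · rcases hv with h | h <;> subst h <;> exact emb_val_lt j _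
  · rintro ⟨hne, hu, hv⟩
    refine ⟨hne, ?_⟩
    set a : Fin (j + 1) := ⟨min u.val v.val, by omega⟩
    set b : Fin (j + 1) := ⟨max u.val v.val, by omega⟩
    have hval : u.val ≠ v.val := fun h => hne (Fin.ext h)
    have hab : a < b := by
      simp only [a, b, Fin.lt_def]
      omega
    refine ⟨enc j a b, ⟨a, b, hab, rfl, ?_⟩, ⟨a, b, hab, rfl, ?_⟩⟩
    · rcases le_or_gt u.val v.val with h | h
      · left; apply Fin.ext; simp [emb, a]; omega
      · right; apply Fin.ext; simp [emb, b]; omega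
    · rcases le_or_gt u.val v.val with h | h
      · right; apply Fin.ext; simp [emb, b]; omega
      · left; apply Fin.ext; simp [emb, a]; omega

lemma isIJ : IsIJDigraph (Dg j) 2 j := by
  refine ⟨?_, ?_, ?_⟩
  · rintro v ⟨a, b, hab, hw, h | h⟩ <;>
    · have h2 : j + 1 ≤ v.val := by rw [hw]; exact enc_val_ge j a b
      have h1 : v.val < j + 1 := by rw [h]; exact emb_val_lt j _
      omega
  · intro v
    by_cases hv : ∃ a b : Fin (j + 1), a < b ∧ v = enc j a b
    · obtain ⟨a, b, hab, rfl⟩ := hv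
      have hsub : {u | Dg j u (enc j a b)} ⊆ {emb j a, emb j b} := by
        rintro u ⟨a', b', hab', henc, hu⟩
        obtain ⟨ha, hb⟩ := enc_inj j henc.symm
        subst ha; subst hb
        rcases hu with h | h <;> simp [h]
      calc ({u | Dg j u (enc j a b)}).ncard ≤ ({emb j a, emb j b} : Set _).ncard :=
            Set.ncard_le_ncard hsub (Set.toFinite _)
        _ ≤ 2 := by
            apply le_trans (Set.ncard_insert_le _ _)
            simp
    · have : {u | Dg j u v} = ∅ := by
        ext u; simp only [Set.mem_setOf_eq, Set.mem_empty_iff_false, iff_false]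
        rintro ⟨a, b, hab, hw, _⟩
        exact hv ⟨a, b, hab, hw⟩
      rw [this]; simp
  · intro u
    by_cases hu : u.val < j + 1
    · set c : Fin (j + 1) := ⟨u.val, hu⟩
      set f : Fin (j + 1) → Fin (nV j) := fun d =>
        if c < d then enc j c d else enc j d c
      have hsub : {w | Dg j u w} ⊆ f '' {c}ᶜ := by
        rintro w ⟨a, b, hab, hw, hab'⟩
        rcases hab' with h | h
        · have hca : c = a := Fin.ext (by simpa [c, emb] using congrArg Fin.val h)
          refine ⟨b, ?_, ?_⟩
          · simp only [Set.mem_compl_iff, Set.mem_singleton_iff]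
            rw [hca]; exact ne_of_gt hab
          · simp only [f, if_pos (hca ▸ hab)]
            rw [hca]; exact hw.symm
        · have hcb : c = b := Fin.ext (by simpa [c, emb] using congrArg Fin.val h)
          refine ⟨a, ?_, ?_⟩
          · simp only [Set.mem_compl_iff, Set.mem_singleton_iff]
            rw [hcb]; exact ne_of_lt hab
          · simp only [f, if_neg (not_lt.mpr (hcb ▸ hab).le)]
            rw [hcb]; exact hw.symm
      calc {w | Dg j u w}.ncard ≤ (f '' {c}ᶜ).ncard :=
            Set.ncard_le_ncard hsub (Set.toFinite _)
        _ ≤ ({c}ᶜ : Set (Fin (j + 1))).ncard := Set.ncard_image_le (Set.toFinite _)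
        _ = j := by
            simp [Set.ncard_eq_toFinset_card', Set.toFinset_compl,
              Set.toFinset_singleton, Finset.card_compl]
    · have : {w | Dg j u w} = ∅ := by
        ext w; simp only [Set.mem_setOf_eq, Set.mem_empty_iff_false, iff_false]
        rintro ⟨a, b, hab, hw, h | h⟩ <;>
          · rw [h] at hu; exact hu (emb_val_lt j _)
      · rw [this]; simp

end Aux

theorem stmt11 (j : ℕ) (hj : 1 ≤ j) :
    ∃ (n : ℕ) (G : SimpleGraph (Fin n)),
      IsIJCompGraph G 2 j ∧ G.cliqueNum = j + 1 := by
  refine ⟨nV j, compGraph (Dg j), ⟨Dg j, isIJ j, rfl⟩, ?_⟩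
  have hGreat : IsGreatest {n | ∃ s, (compGraph (Dg j)).IsNClique n s} (j + 1) := by
    constructor
    · refine ⟨(Finset.univ : Finset (Fin (j + 1))).map ⟨emb j, ?_⟩, ?_, ?_⟩
      · intro a b h
        exact Fin.ext (by simpa [emb] using congrArg Fin.val h)
      · intro u hu v hv hne
        simp only [Finset.coe_map, Set.mem_image, Finset.coe_univ, Set.mem_univ,
          Function.Embedding.coeFn_mk, true_and] at hu hv
        obtain ⟨a, rfl⟩ := hu; obtain ⟨b, rfl⟩ := hv
        exact (adj_iff j _ _).2 ⟨hne, emb_val_lt j a, emb_val_lt j b⟩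
      · simp
    · rintro m ⟨s, hs, hcard⟩
      rcases le_or_gt m 1 with h | h
      · omega
      · have hall : ∀ x ∈ s, x.val < j + 1 := by
          intro x hx
          obtain ⟨y, hy, hyx⟩ : ∃ y ∈ s, y ≠ x := by
            by_contra hc
            push_neg at hc
            have : s ⊆ {x} := fun z hz => Finset.mem_singleton.2 (hc z hz)
            have := Finset.card_le_card this
            simp at this
            omega
          have := hs hy hx hyx
          exact ((adj_iff j _ _).1 this).2.2
        have : s.card ≤ Fintype.card (Fin (j + 1)) := by
          apply Finset.card_le_card_of_injOn (fun x => (⟨x.val % (j + 1), Nat.mod_lt _ (by omega)⟩ : Fin (j + 1)))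
          · intro x _; exact Finset.mem_univ _
          · intro x hx y hy hxy
            have hx' := hall x hx; have hy' := hall y hy
            simp only [Fin.mk.injEq, Nat.mod_eq_of_lt hx', Nat.mod_eq_of_lt hy'] at hxy
            exact Fin.ext hxy
        simp [hcard] at this
        omega
  exact hGreat.csSup_eq
end

section
/- Let D be a loopless digraph in which every vertex has indegree at most i and outdegree at most j, and let G be its competition graph. If D contains no subdigraph D' that (a) is loopless with every vertex of indegree 0 or 2 and outdegree 0 or 2, (b) is irredundant (no two vertices have two common out-neighbors in D'), (c) induces no triangle in its competition graph, and (d) has at least one arc, then G is chordal. -/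
/-- A graph is chordal iff it has no induced cycle (hole) of length at least 4. -/
def IsChordal {V : Type*} (G : SimpleGraph V) : Prop :=
  ∀ n, 4 ≤ n → IsEmpty (SimpleGraph.cycleGraph n ↪g G)

/-- `D'` is a ⟨2̄,2̄⟩ good digraph: every indegree and outdegree is 0 or 2,
it is irredundant, its competition graph is triangle-free, and it has an arc. -/
def IsGoodDigraph {V : Type*} (D : V → V → Prop) : Prop :=
  (∀ v, ¬ D v v) ∧
  (∀ v, {u | D u v}.ncard = 0 ∨ {u | D u v}.ncard = 2) ∧
  (∀ u, {w | D u w}.ncard = 0 ∨ {w | D u w}.ncard = 2) ∧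
  (∀ u v, u ≠ v → {w | D u w ∧ D v w}.ncard ≤ 1) ∧
  (compGraph D).CliqueFree 3 ∧
  (∃ u v, D u v)


theorem stmt12 {V : Type*} [Fintype V] (D : V → V → Prop) (i j : ℕ)
    (hD : IsIJDigraph D i j)
    (hno : ∀ D' : V → V → Prop, (∀ u v, D' u v → D u v) → ¬ IsGoodDigraph D') :
    IsChordal (compGraph D) := by
  classical
  intro n hn
  constructor
  intro f
  haveI : NeZero n := ⟨by omega⟩
  -- small numeral facts in `Fin n`
  have hnum : (1 : Fin n) ≠ 0 ∧ (1 : Fin n) + 1 ≠ 0 ∧ (1 : Fin n) + (1 + 1) ≠ 0 ∧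
      (1 : Fin n) + 1 ≠ 1 ∧ (1 : Fin n).val = 1 := by
    refine ⟨?_, ?_, ?_, ?_, ?_⟩ <;>
      simp [Fin.ext_iff, Fin.add_def, Fin.val_one',
        Nat.mod_eq_of_lt (show 0 < n by omega), Nat.mod_eq_of_lt (show 1 < n by omega),
        Nat.mod_eq_of_lt (show 2 < n by omega), Nat.mod_eq_of_lt (show 3 < n by omega)]
  obtain ⟨h10, h20, h30, h21, hv1⟩ := hnum
  have hfi : Function.Injective f := f.injective
  -- consecutive vertices on the cycle are adjacent in the competition graph
  have hadj : ∀ k : Fin n, (compGraph D).Adj (f k) (f (k + 1)) := by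
    intro k
    refine f.map_rel_iff.mpr ?_
    rw [SimpleGraph.cycleGraph_adj']
    right
    rw [add_sub_cancel_left, hv1]
  -- key: two vertices of the cycle with a common prey are consecutive
  have keyadj : ∀ p q : Fin n, p ≠ q → ∀ x, D (f p) x → D (f q) x →
      p = q + 1 ∨ q = p + 1 := by
    intro p q hpq x hx1 hx2
    have hAdj : (compGraph D).Adj (f p) (f q) := ⟨hfi.ne hpq, x, hx1, hx2⟩
    have h := SimpleGraph.cycleGraph_adj'.mp (f.map_rel_iff.mp hAdj)
    rcases h with h | h
    · left
      have : p - q = 1 := Fin.val_injective (by rw [h, hv1])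
      exact sub_eq_iff_eq_add'.mp this
    · right
      have : q - p = 1 := Fin.val_injective (by rw [h, hv1])
      exact sub_eq_iff_eq_add'.mp this
  -- choose a common prey for each edge of the cycle
  have hex : ∀ k : Fin n, ∃ x, D (f k) x ∧ D (f (k + 1)) x := fun k => (hadj k).2
  choose w hw1 hw2 using hex
  -- the preys are pairwise distinct
  have hwinj : Function.Injective w := by
    intro k l hkl
    by_contra hne
    rcases keyadj k l hne (w k) (hw1 k) (hkl ▸ hw1 l) with h | h
    · -- k = l + 1; consider the pair (l, l + 1 + 1)
      subst h
      have hne2 : l ≠ l + 1 + 1 := by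
        intro hc
        rw [add_assoc] at hc
        exact h20 (left_eq_add.mp hc)
      rcases keyadj l (l + 1 + 1) hne2 (w l) (hw1 l) (hkl ▸ hw2 (l + 1)) with h' | h'
      · rw [add_assoc, add_assoc] at h'
        exact h30 (left_eq_add.mp h')
      · rw [add_assoc] at h'
        exact h21 (add_left_cancel h')
    · -- l = k + 1; symmetric
      subst h
      have hne2 : k ≠ k + 1 + 1 := by
        intro hc
        rw [add_assoc] at hc
        exact h20 (left_eq_add.mp hc)
      rcases keyadj k (k + 1 + 1) hne2 (w k) (hw1 k) (hkl ▸ hw2 (k + 1)) with h' | h'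
      · rw [add_assoc, add_assoc] at h'
        exact h30 (left_eq_add.mp h')
      · rw [add_assoc] at h'
        exact h21 (add_left_cancel h')
  have hsucc_ne : ∀ k : Fin n, f k ≠ f (k + 1) := by
    intro k hc
    exact h10 (left_eq_add.mp (hfi hc))
  -- the good subdigraph
  set D' : V → V → Prop := fun u x => ∃ k, x = w k ∧ (u = f k ∨ u = f (k + 1)) with hD'
  have hsub : ∀ u v, D' u v → D u v := by
    rintro u x ⟨k, rfl, h | h⟩
    · rw [h]; exact hw1 k
    · rw [h]; exact hw2 k
  -- a pair-determination helper
  have pairca : ∀ (u u' : V) (k : Fin n), u ≠ u' →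
      (u = f k ∨ u = f (k + 1)) → (u' = f k ∨ u' = f (k + 1)) →
      (u = f k ∧ u' = f (k + 1)) ∨ (u = f (k + 1) ∧ u' = f k) := by
    intro u u' k huu h1 h2
    rcases h1 with h1 | h1 <;> rcases h2 with h2 | h2
    · exact absurd (h1.trans h2.symm) huu
    · exact Or.inl ⟨h1, h2⟩
    · exact Or.inr ⟨h1, h2⟩
    · exact absurd (h1.trans h2.symm) huu
  refine hno D' hsub ⟨?_, ?_, ?_, ?_, ?_, ?_⟩
  · -- loopless
    intro v hv
    exact hD.1 v (hsub v v hv)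
  · -- indegrees
    intro x
    by_cases hx : ∃ k, x = w k
    · right
      obtain ⟨k, rfl⟩ := hx
      have : {u | D' u (w k)} = {f k, f (k + 1)} := by
        ext u
        constructor
        · rintro ⟨l, hl, h⟩
          rw [← hwinj hl] at h
          exact h
        · rintro (h | h) <;> exact ⟨k, rfl, by tauto⟩
      rw [this]
      exact Set.ncard_pair (hsucc_ne k)
    · left
      have : {u | D' u x} = ∅ := by
        ext u
        simp only [Set.mem_setOf_eq, Set.mem_empty_iff_false, iff_false]
        rintro ⟨l, hl, -⟩
        exact hx ⟨l, hl⟩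
      rw [this, Set.ncard_empty]
  · -- outdegrees
    intro u
    by_cases hu : ∃ m, u = f m
    · right
      obtain ⟨m, rfl⟩ := hu
      have : {x | D' (f m) x} = {w m, w (m - 1)} := by
        ext x
        constructor
        · rintro ⟨k, rfl, h | h⟩
          · rw [hfi h]; exact Or.inl rfl
          · have : m - 1 = k := by rw [hfi h]; exact add_sub_cancel_right k 1
            rw [← this]; exact Or.inr rfl
        · rintro (h | h)
          · exact ⟨m, h, Or.inl rfl⟩
          · exact ⟨m - 1, h, Or.inr (by rw [sub_add_cancel])⟩
      rw [this]
      refine Set.ncard_pair (hwinj.ne ?_)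
      intro hc
      have h2 : m + 1 = m := by
        conv_lhs => rw [hc]
        rw [sub_add_cancel]
      exact h10 (left_eq_add.mp h2.symm)
    · left
      have : {x | D' u x} = ∅ := by
        ext x
        simp only [Set.mem_setOf_eq, Set.mem_empty_iff_false, iff_false]
        rintro ⟨k, -, h | h⟩ <;> exact hu ⟨_, h⟩
      rw [this, Set.ncard_empty]
  · -- irredundant
    intro u u' huu
    rw [Set.ncard_le_one_iff]
    rintro x x' ⟨⟨k, rfl, hk1⟩, ⟨k', hk', hk2⟩⟩ ⟨⟨l, rfl, hl1⟩, ⟨l', hl', hl2⟩⟩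
    rw [← hwinj hk'] at hk2
    rw [← hwinj hl'] at hl2
    have hA := pairca u u' k huu hk1 hk2
    have hB := pairca u u' l huu hl1 hl2
    have hkl : k = l := by
      rcases hA with ⟨ha1, ha2⟩ | ⟨ha1, ha2⟩ <;> rcases hB with ⟨hb1, hb2⟩ | ⟨hb1, hb2⟩
      · exact hfi (ha1.symm.trans hb1)
      · exfalso
        have e1 : k = l + 1 := hfi (ha1.symm.trans hb1)
        have e2 : k + 1 = l := hfi (ha2.symm.trans hb2)
        rw [e1, add_assoc] at e2
        exact h20 (left_eq_add.mp e2.symm)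
      · exfalso
        have e1 : k + 1 = l := hfi (ha1.symm.trans hb1)
        have e2 : k = l + 1 := hfi (ha2.symm.trans hb2)
        rw [e2, add_assoc] at e1
        exact h20 (left_eq_add.mp e1.symm)
      · exact add_right_cancel (hfi (ha1.symm.trans hb1))
    rw [hkl]
  · -- triangle-free competition graph
    intro s hs
    obtain ⟨a, b, c, hab, hac, hbc, hsabc⟩ := Finset.card_eq_three.mp hs.2
    have hclique := hs.1
    rw [hsabc] at hclique
    have hmem : ∀ x ∈ ({a, b, c} : Finset V), ∃ p, x = f p := by
      intro x hx
      have hxadj : ∃ y ∈ ({a, b, c} : Finset V), (compGraph D').Adj x y := by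
        rcases Finset.mem_insert.mp hx with rfl | hx'
        · exact ⟨b, by simp, hclique (by simp) (by simp) hab⟩
        rcases Finset.mem_insert.mp hx' with rfl | hx''
        · exact ⟨a, by simp, (hclique (by simp) (by simp) hab).symm⟩
        · rw [Finset.mem_singleton] at hx''
          subst hx''
          exact ⟨a, by simp, (hclique (by simp) (by simp) hac).symm⟩
      obtain ⟨y, -, -, x', ⟨k, -, h | h⟩, -⟩ := hxadj
      · exact ⟨k, h⟩
      · exact ⟨k + 1, h⟩
    obtain ⟨p, rfl⟩ := hmem a (by simp)
    obtain ⟨q, rfl⟩ := hmem b (by simp)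
    obtain ⟨r, rfl⟩ := hmem c (by simp)
    have hpq : p ≠ q := fun h => hab (h ▸ rfl)
    have hpr : p ≠ r := fun h => hac (h ▸ rfl)
    have hqr : q ≠ r := fun h => hbc (h ▸ rfl)
    have step : ∀ p q : Fin n, p ≠ q → (compGraph D').Adj (f p) (f q) →
        p = q + 1 ∨ q = p + 1 := by
      rintro p q hpq ⟨-, x, hx1, hx2⟩
      exact keyadj p q hpq x (hsub _ _ hx1) (hsub _ _ hx2)
    have e1 := step p q hpq (hclique (by simp) (by simp) hab)
    have e2 := step q r hqr (hclique (by simp) (by simp) hbc)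
    have e3 := step p r hpr (hclique (by simp) (by simp) hac)
    rcases e1 with e1 | e1 <;> rcases e2 with e2 | e2 <;> rcases e3 with e3 | e3
    · -- p = q+1, q = r+1, p = r+1
      rw [e2] at e1
      exact h10 (left_eq_add.mp (e3.symm.trans e1))
    · -- p = q+1, q = r+1, r = p+1
      rw [e1, e2, add_assoc, add_assoc] at e3
      exact h30 (left_eq_add.mp e3)
    · -- p = q+1, r = q+1, p = r+1
      exact hpr (e1.trans e2.symm)
    · -- p = q+1, r = q+1, r = p+1
      exact hpr (e1.trans e2.symm)
    · -- q = p+1, q = r+1, p = r+1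
      exact hpr (add_right_cancel (e1.symm.trans e2))
    · -- q = p+1, q = r+1, r = p+1
      exact hpr (add_right_cancel (e1.symm.trans e2))
    · -- q = p+1, r = q+1, p = r+1
      rw [e2, e1, add_assoc, add_assoc] at e3
      exact h30 (left_eq_add.mp e3)
    · -- q = p+1, r = q+1, r = p+1
      rw [e1] at e2
      exact h10 (left_eq_add.mp (e3.symm.trans e2))
  · exact ⟨f 0, w 0, 0, rfl, Or.inl rfl⟩
end

section
/- Let D be a loopless digraph in which every vertex has indegree at most i and outdegree at most 2, and let G be its competition graph. Then G is chordal if and only if D contains no ⟨2̄,2̄⟩ good subdigraph, i.e., no subdigraph D' that is loopless with all indegrees and outdegrees equal to 0 or 2, is irredundant, has at least one arc, and whose competition graph contains no triangle. -/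
open SimpleGraph

section CycleHelpers

lemma cycleAdj {m : ℕ} (u v : Fin (m+4)) :
    (SimpleGraph.cycleGraph (m+4)).Adj u v ↔ (u = v + 1 ∨ v = u + 1) := by
  rw [SimpleGraph.cycleGraph_adj]
  constructor
  · rintro (h | h)
    · left; rw [sub_eq_iff_eq_add] at h; exact h.trans (add_comm 1 v)
    · right; rw [sub_eq_iff_eq_add] at h; exact h.trans (add_comm 1 u)
  · rintro (h | h)
    · left; rw [sub_eq_iff_eq_add]; exact h.trans (add_comm v 1)
    · right; rw [sub_eq_iff_eq_add]; exact h.trans (add_comm u 1)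

lemma finval1 (m : ℕ) : ((1 : Fin (m+4)) : ℕ) = 1 := by
  rw [Fin.val_one']; exact Nat.mod_eq_of_lt (by omega)

lemma finval2 (m : ℕ) : ((1+1 : Fin (m+4)) : ℕ) = 2 := by
  rw [Fin.val_add, finval1]; exact Nat.mod_eq_of_lt (by omega)

lemma finval3 (m : ℕ) : ((1+(1+1) : Fin (m+4)) : ℕ) = 3 := by
  rw [Fin.val_add, finval1, finval2]; exact Nat.mod_eq_of_lt (by omega)

lemma fin_neq1 {m : ℕ} (a : Fin (m+4)) : a + 1 ≠ a := by
  intro h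
  have := congrArg Fin.val (add_eq_left.mp h)
  rw [finval1, Fin.val_zero] at this
  omega

lemma fin_neq2 {m : ℕ} (a : Fin (m+4)) : a + 1 + 1 ≠ a := by
  intro h
  rw [add_assoc] at h
  have := congrArg Fin.val (add_eq_left.mp h)
  rw [finval2, Fin.val_zero] at this
  omega

lemma fin_neq3 {m : ℕ} (a : Fin (m+4)) : a + 1 + 1 + 1 ≠ a := by
  intro h
  rw [add_assoc, add_assoc] at h
  have := congrArg Fin.val (add_eq_left.mp h)
  rw [finval3, Fin.val_zero] at this
  omega

lemma cycle_trifree (m : ℕ) : (SimpleGraph.cycleGraph (m+4)).CliqueFree 3 := by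
  intro t ht
  obtain ⟨a, b, c, hab, hac, hbc, rfl⟩ := Finset.card_eq_three.mp ht.card_eq
  obtain ⟨h1, h2, h3⟩ := SimpleGraph.is3Clique_triple_iff.mp ht
  rw [cycleAdj] at h1 h2 h3
  rcases h1 with h1 | h1 <;> rcases h2 with h2 | h2 <;> rcases h3 with h3 | h3
  · subst h3; exact fin_neq1 (c+1) (h1.symm.trans h2)
  · exact hbc (add_right_cancel (h1.symm.trans h2))
  · rw [h2] at h3; rw [h1] at h3
    exact fin_neq3 b h3.symm
  · have h2' : c = b + 1 + 1 := by rw [h2, h1]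
    exact fin_neq1 (b+1) (h2'.symm.trans h3)
  · have h1' : b = c + 1 + 1 := by rw [h1, h2]
    exact fin_neq1 (c+1) (h1'.symm.trans h3)
  · have h3' : c = a + 1 + 1 := by rw [h3, h1]
    rw [h3'] at h2
    exact fin_neq3 a h2.symm
  · exact hbc (h1.trans h2.symm)
  · exact hab (add_right_cancel (h3.symm.trans h2)).symm
end CycleHelpers

section HoleToGood

variable {V : Type*}

lemma empty_or_pair_ncard_aux {s : Set V} {a b : V} (h : s = {a, b}) (hab : a ≠ b) :
    s.ncard = 2 := by rw [h]; exact Set.ncard_pair hab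

lemma hole_to_good (D : V → V → Prop) (hloop : ∀ v, ¬ D v v)
    (m : ℕ) (f : SimpleGraph.cycleGraph (m+4) ↪g compGraph D) :
    ∃ D' : V → V → Prop, (∀ u v, D' u v → D u v) ∧ IsGoodDigraph D' := by
  classical
  have hfinj : Function.Injective f := f.injective
  have hchoice : ∀ k : Fin (m+4), ∃ x, D (f k) x ∧ D (f (k+1)) x := by
    intro k
    have h : (compGraph D).Adj (f k) (f (k+1)) :=
      f.map_rel_iff.mpr ((cycleAdj _ _).mpr (Or.inr rfl))
    exact h.2
  choose w hw1 hw2 using hchoice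
  have hshare : ∀ x y : Fin (m+4), x ≠ y → ∀ c, D (f x) c → D (f y) c →
      x = y + 1 ∨ y = x + 1 := by
    intro x y hxy c h1 h2
    exact (cycleAdj _ _).mp (f.map_rel_iff.mp ⟨fun h => hxy (hfinj h), c, h1, h2⟩)
  have hwinj : Function.Injective w := by
    intro j k hjk
    by_contra hne
    have Dk : D (f k) (w j) := hjk ▸ hw1 k
    have Dk1 : D (f (k+1)) (w j) := hjk ▸ hw2 k
    have P : ∀ x y : Fin (m+4), D (f x) (w j) → D (f y) (w j) →
        x = y ∨ x = y + 1 ∨ y = x + 1 := by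
      intro x y hx hy
      by_cases hxy : x = y
      · exact Or.inl hxy
      · exact Or.inr (hshare x y hxy _ hx hy)
    rcases P j k (hw1 j) Dk with h | h | h
    · exact hne h
    · rcases P (j+1) k (hw2 j) Dk with h' | h' | h'
      · rw [h] at h'; exact fin_neq2 k h'
      · rw [h] at h'; exact fin_neq1 (k+1) h'
      · rw [h] at h'; exact fin_neq3 k h'.symm
    · rcases P j (k+1) (hw1 j) Dk1 with h' | h' | h'
      · rw [h] at h'; exact fin_neq2 j h'.symm
      · rw [h] at h'; exact fin_neq3 j h'.symm
      · rw [h] at h'; exact fin_neq1 (j+1) h'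
  obtain ⟨D', hD'⟩ : ∃ D' : V → V → Prop,
      D' = fun u x => ∃ j : Fin (m+4), (u = f j ∨ u = f (j+1)) ∧ x = w j := ⟨_, rfl⟩
  have hsub : ∀ u v, D' u v → D u v := by
    rw [hD']
    rintro u v ⟨j, hj, rfl⟩
    rcases hj with rfl | rfl
    · exact hw1 j
    · exact hw2 j
  -- out-neighbourhood of a hole vertex
  have hset : ∀ k : Fin (m+4), {x | D' (f k) x} = {w k, w (k-1)} := by
    intro k
    ext x
    simp only [hD', Set.mem_setOf_eq, Set.mem_insert_iff, Set.mem_singleton_iff]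
    constructor
    · rintro ⟨j, hj, rfl⟩
      rcases hj with hj | hj
      · left; rw [hfinj hj]
      · right; have hk : k = j + 1 := hfinj hj
        rw [hk, add_sub_cancel_right]
    · rintro (rfl | rfl)
      · exact ⟨k, Or.inl rfl, rfl⟩
      · exact ⟨k - 1, Or.inr (by rw [sub_add_cancel]), rfl⟩
  have hempty : ∀ u, (¬ ∃ k, u = f k) → {x | D' u x} = ∅ := by
    intro u hu
    ext x
    simp only [hD', Set.mem_setOf_eq, Set.mem_empty_iff_false, iff_false]
    rintro ⟨j, hj, rfl⟩
    rcases hj with hj | hj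
    · exact hu ⟨j, hj⟩
    · exact hu ⟨j+1, hj⟩
  have hwne : ∀ k : Fin (m+4), w k ≠ w (k-1) := by
    intro k h
    have hk := hwinj h
    have h2 : k - 1 + 1 = k - 1 := by nth_rewrite 2 [← hk]; rw [sub_add_cancel]
    exact fin_neq1 (k-1) h2
  refine ⟨D', hsub, ?_, ?_, ?_, ?_, ?_, ⟨f 0, w 0, by rw [hD']; exact ⟨0, Or.inl rfl, rfl⟩⟩⟩
  · exact fun v hv => hloop v (hsub v v hv)
  · -- indegrees
    intro x
    by_cases hx : ∃ k, x = w k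
    · obtain ⟨k, rfl⟩ := hx
      right
      have hpair : {u | D' u (w k)} = {f k, f (k+1)} := by
        ext u
        simp only [hD', Set.mem_setOf_eq, Set.mem_insert_iff, Set.mem_singleton_iff]
        constructor
        · rintro ⟨j, hj, hwj⟩
          have : j = k := hwinj hwj.symm
          subst this; exact hj
        · rintro (rfl | rfl)
          · exact ⟨k, Or.inl rfl, rfl⟩
          · exact ⟨k, Or.inr rfl, rfl⟩
      rw [hpair]
      exact Set.ncard_pair (fun h => fin_neq1 k ((hfinj h).symm))
    · left
      have hx' : {u | D' u x} = ∅ := by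
        ext u
        simp only [hD', Set.mem_setOf_eq, Set.mem_empty_iff_false, iff_false]
        rintro ⟨j, _, rfl⟩
        exact hx ⟨j, rfl⟩
      rw [hx', Set.ncard_empty]
  · -- outdegrees
    intro u
    by_cases hu : ∃ k, u = f k
    · obtain ⟨k, rfl⟩ := hu
      right
      rw [hset k]
      exact Set.ncard_pair (hwne k)
    · left
      rw [hempty u hu, Set.ncard_empty]
  · -- irredundant
    intro u v huv
    by_cases hu : ∃ k, u = f k
    · by_cases hv : ∃ k, v = f k
      · obtain ⟨a, rfl⟩ := hu
        obtain ⟨b, rfl⟩ := hv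
        have hab : a ≠ b := fun h => huv (by rw [h])
        have hfin : {x | D' (f a) x ∧ D' (f b) x}.Finite := by
          refine Set.Finite.subset ((Set.finite_singleton (w (a-1))).insert (w a)) ?_
          intro x hx
          show x ∈ ({w a, w (a-1)} : Set V)
          rw [← hset a]
          exact hx.1
        rw [Set.ncard_le_one_iff hfin]
        intro x y hx hy
        have hxa : x = w a ∨ x = w (a-1) := by
          have h' : x ∈ {x | D' (f a) x} := hx.1
          rw [hset a] at h'; simpa using h'
        have hxb : x = w b ∨ x = w (b-1) := by
          have h' : x ∈ {x | D' (f b) x} := hx.2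
          rw [hset b] at h'; simpa using h'
        have hya : y = w a ∨ y = w (a-1) := by
          have h' : y ∈ {x | D' (f a) x} := hy.1
          rw [hset a] at h'; simpa using h'
        have hyb : y = w b ∨ y = w (b-1) := by
          have h' : y ∈ {x | D' (f b) x} := hy.2
          rw [hset b] at h'; simpa using h'
        have key : ∀ z, z = w a ∨ z = w (a-1) → z = w b ∨ z = w (b-1) →
            (z = w a ∧ a = b - 1) ∨ (z = w (a-1) ∧ a - 1 = b) := by
          intro z hza hzb
          rcases hza with rfl | rfl
          · left
            refine ⟨rfl, ?_⟩
            rcases hzb with h | h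
            · exact absurd (hwinj h) hab
            · exact hwinj h
          · right
            refine ⟨rfl, ?_⟩
            rcases hzb with h | h
            · exact hwinj h
            · exfalso
              have := hwinj h
              have h2 : a = b := by
                have := congrArg (· + 1) this
                simpa [sub_add_cancel] using this
              exact hab h2
        rcases key x hxa hxb with ⟨hx1, ha1⟩ | ⟨hx1, ha1⟩ <;>
          rcases key y hya hyb with ⟨hy1, ha2⟩ | ⟨hy1, ha2⟩
        · rw [hx1, hy1]
        · exfalso
          rw [eq_sub_iff_add_eq] at ha1
          rw [sub_eq_iff_eq_add] at ha2
          rw [← ha1] at ha2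
          exact fin_neq2 a ha2.symm
        · exfalso
          rw [eq_sub_iff_add_eq] at ha2
          rw [sub_eq_iff_eq_add] at ha1
          rw [← ha2] at ha1
          exact fin_neq2 a ha1.symm
        · rw [hx1, hy1]
      · have h0 : {x | D' u x ∧ D' v x} = ∅ := by
          ext x
          simp only [Set.mem_setOf_eq, Set.mem_empty_iff_false, iff_false]
          rintro ⟨h1, h2⟩
          have h' : x ∈ {x | D' v x} := h2
          rw [hempty v hv] at h'
          exact h'
        rw [h0, Set.ncard_empty]
        omega
    · have h0 : {x | D' u x ∧ D' v x} = ∅ := by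
        ext x
        simp only [Set.mem_setOf_eq, Set.mem_empty_iff_false, iff_false]
        rintro ⟨h1, h2⟩
        have h' : x ∈ {x | D' u x} := h1
        rw [hempty u hu] at h'
        exact h'
      rw [h0, Set.ncard_empty]
      omega
  · -- triangle-free
    have hidx : ∀ x y, (compGraph D').Adj x y → ∃ a b : Fin (m+4),
        x = f a ∧ y = f b ∧ (SimpleGraph.cycleGraph (m+4)).Adj a b := by
      intro x y hxy
      obtain ⟨hne, c, hcx, hcy⟩ := hxy
      rw [hD'] at hcx hcy
      obtain ⟨j1, hj1, rfl⟩ := hcx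
      obtain ⟨j2, hj2, hc2⟩ := hcy
      have : j2 = j1 := hwinj hc2.symm
      subst this
      rcases hj1 with rfl | rfl <;> rcases hj2 with rfl | rfl
      · exact absurd rfl hne
      · exact ⟨j2, j2+1, rfl, rfl, (cycleAdj _ _).mpr (Or.inr rfl)⟩
      · exact ⟨j2+1, j2, rfl, rfl, (cycleAdj _ _).mpr (Or.inl rfl)⟩
      · exact absurd rfl hne
    intro t ht
    obtain ⟨x, y, z, hxy, hxz, hyz, rfl⟩ := Finset.card_eq_three.mp ht.card_eq
    obtain ⟨h1, h2, h3⟩ := SimpleGraph.is3Clique_triple_iff.mp ht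
    obtain ⟨a1, b1, hx1, hy1, hA⟩ := hidx x y h1
    obtain ⟨a3, c3, hx3, hz3, hB⟩ := hidx x z h2
    obtain ⟨b2, c2, hy2, hz2, hC⟩ := hidx y z h3
    have e1 : a3 = a1 := hfinj (hx3.symm.trans hx1)
    have e2 : b2 = b1 := hfinj (hy2.symm.trans hy1)
    have e3 : c3 = c2 := hfinj (hz3.symm.trans hz2)
    subst e1; subst e2; subst e3
    exact cycle_trifree m _ (SimpleGraph.is3Clique_triple_iff.mpr ⟨hA, hB, hC⟩)

end HoleToGood

section GoodNotChordal

variable {V : Type*}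

lemma two_mem {S : Set V} (hS : S.ncard = 2) {x : V} (hx : x ∈ S) :
    ∃ y, y ≠ x ∧ S = {x, y} := by
  obtain ⟨a, b, hab, rfl⟩ := Set.ncard_eq_two.mp hS
  simp only [Set.mem_insert_iff, Set.mem_singleton_iff] at hx
  rcases hx with rfl | rfl
  · exact ⟨b, hab.symm, rfl⟩
  · exact ⟨a, hab, Set.pair_comm _ _⟩

open Classical in
noncomputable def otherEl (S : Set V) (x : V) : V :=
  if h : ∃ y, y ≠ x ∧ S = {x, y} then h.choose else x

lemma otherEl_spec {S : Set V} {x : V} (hS : S.ncard = 2) (hx : x ∈ S) :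
    otherEl S x ≠ x ∧ S = {x, otherEl S x} := by
  have h : ∃ y, y ≠ x ∧ S = {x, y} := two_mem hS hx
  rw [otherEl, dif_pos h]
  exact h.choose_spec

noncomputable def stepFn (D' : V → V → Prop) (s : V × V) : V × V :=
  (otherEl {z | D' z (otherEl {x | D' s.1 x} s.2)} s.1, otherEl {x | D' s.1 x} s.2)

noncomputable def sigmaFn (D' : V → V → Prop) (s : V × V) : V × V :=
  (s.1, otherEl {x | D' s.1 x} s.2)

lemma fin_val_add_one {m : ℕ} (a : Fin (m+4)) : ((a + 1 : Fin (m+4)) : ℕ) = (a.val + 1) % (m+4) := by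
  rw [Fin.val_add, finval1]

lemma good_not_chordal [Fintype V] {D D' : V → V → Prop}
    (hsub : ∀ u v, D' u v → D u v) (hDout : ∀ u, {x | D u x}.ncard ≤ 2)
    (hg : IsGoodDigraph D') : ¬ IsChordal (compGraph D) := by
  classical
  obtain ⟨hl, hin, hout, hirr, htf, a0, b0, harc⟩ := hg
  have hout2 : ∀ {u p : V}, D' u p → {x | D' u x}.ncard = 2 := by
    intro u p h
    rcases hout u with h0 | h2
    · exfalso
      rw [Set.ncard_eq_zero (Set.toFinite _)] at h0
      have hp : p ∈ {x | D' u x} := h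
      rw [h0] at hp
      exact hp
    · exact h2
  have hin2 : ∀ {u p : V}, D' u p → {z | D' z p}.ncard = 2 := by
    intro u p h
    rcases hin p with h0 | h2
    · exfalso
      rw [Set.ncard_eq_zero (Set.toFinite _)] at h0
      have hp : u ∈ {z | D' z p} := h
      rw [h0] at hp
      exact hp
    · exact h2
  have hspec : ∀ s : V × V, D' s.1 s.2 →
      ((stepFn D' s).2 ≠ s.2 ∧ {x | D' s.1 x} = {s.2, (stepFn D' s).2}) ∧
      ((stepFn D' s).1 ≠ s.1 ∧ {z | D' z ((stepFn D' s).2)} = {s.1, (stepFn D' s).1}) := by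
    intro s h
    have h1 := otherEl_spec (hout2 h) (show s.2 ∈ {x | D' s.1 x} from h)
    have hmem : D' s.1 (otherEl {x | D' s.1 x} s.2) := by
      have h' : otherEl {x | D' s.1 x} s.2 ∈ ({s.2, otherEl {x | D' s.1 x} s.2} : Set V) :=
        Set.mem_insert_iff.mpr (Or.inr rfl)
      rw [← h1.2] at h'
      exact h'
    have h2 := otherEl_spec (hin2 hmem)
      (show s.1 ∈ {z | D' z (otherEl {x | D' s.1 x} s.2)} from hmem)
    exact ⟨⟨h1.1, h1.2⟩, ⟨h2.1, h2.2⟩⟩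
  have hvalid : ∀ s : V × V, D' s.1 s.2 → D' (stepFn D' s).1 (stepFn D' s).2 := by
    intro s h
    have h2 := (hspec s h).2.2
    have h' : (stepFn D' s).1 ∈ {z | D' z ((stepFn D' s).2)} := by
      rw [h2]; exact Set.mem_insert_iff.mpr (Or.inr rfl)
    exact h'
  have hsigma_valid : ∀ s : V × V, D' s.1 s.2 → D' (sigmaFn D' s).1 (sigmaFn D' s).2 := by
    intro s h
    have h1 := (hspec s h).1.2
    have h' : (stepFn D' s).2 ∈ ({s.2, (stepFn D' s).2} : Set V) :=
      Set.mem_insert_iff.mpr (Or.inr rfl)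
    rw [← h1] at h'
    exact h'
  have hstep_inj : ∀ s t : V × V, D' s.1 s.2 → D' t.1 t.2 → stepFn D' s = stepFn D' t → s = t := by
    intro s t hs ht heq
    obtain ⟨⟨hp2, hout_s⟩, ⟨hu2, hin_s⟩⟩ := hspec s hs
    obtain ⟨⟨hq2, hout_t⟩, ⟨hv2, hin_t⟩⟩ := hspec t ht
    rw [heq] at hout_s hin_s
    have h1 : t.1 = s.1 := by
      have hm : t.1 ∈ ({s.1, (stepFn D' t).1} : Set V) := by
        rw [← hin_s, hin_t]; exact Set.mem_insert _ _
      simp only [Set.mem_insert_iff, Set.mem_singleton_iff] at hm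
      rcases hm with h | h
      · exact h
      · exact absurd h.symm hv2
    have h2 : t.2 = s.2 := by
      rw [h1] at hout_t
      have hm : t.2 ∈ ({s.2, (stepFn D' t).2} : Set V) := by
        rw [← hout_s, hout_t]; exact Set.mem_insert _ _
      simp only [Set.mem_insert_iff, Set.mem_singleton_iff] at hm
      rcases hm with h | h
      · exact h
      · exact absurd h.symm hq2
    exact Prod.ext_iff.mpr ⟨h1.symm, h2.symm⟩
  have hkey : ∀ s : V × V, D' s.1 s.2 →
      stepFn D' (sigmaFn D' (stepFn D' s)) = sigmaFn D' s := by
    intro s h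
    obtain ⟨⟨hp', houts⟩, ⟨hu', hins⟩⟩ := hspec s h
    have hv1 : D' (stepFn D' s).1 (stepFn D' s).2 := hvalid s h
    obtain ⟨⟨hp'', houts1⟩, -⟩ := hspec (stepFn D' s) hv1
    have hv2 : D' (sigmaFn D' (stepFn D' s)).1 (sigmaFn D' (stepFn D' s)).2 :=
      hsigma_valid _ hv1
    obtain ⟨⟨hq, houts2⟩, ⟨hz, hins2⟩⟩ := hspec (sigmaFn D' (stepFn D' s)) hv2
    have e2 : (stepFn D' (sigmaFn D' (stepFn D' s))).2 = (stepFn D' s).2 := by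
      have hmem : (stepFn D' (sigmaFn D' (stepFn D' s))).2 ∈
          ({(stepFn D' s).2, (stepFn D' (stepFn D' s)).2} : Set V) := by
        rw [← houts1]
        have h' : (stepFn D' (sigmaFn D' (stepFn D' s))).2 ∈
            {x | D' (sigmaFn D' (stepFn D' s)).1 x} := by
          rw [houts2]; exact Set.mem_insert_iff.mpr (Or.inr rfl)
        exact h'
      simp only [Set.mem_insert_iff, Set.mem_singleton_iff] at hmem
      rcases hmem with h' | h'
      · exact h'
      · exact absurd h' hq
    have e1 : (stepFn D' (sigmaFn D' (stepFn D' s))).1 = s.1 := by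
      rw [e2] at hins2
      have hmem : (stepFn D' (sigmaFn D' (stepFn D' s))).1 ∈
          ({s.1, (stepFn D' s).1} : Set V) := by
        rw [← hins]
        have h' : (stepFn D' (sigmaFn D' (stepFn D' s))).1 ∈
            {z | D' z ((stepFn D' s).2)} := by
          rw [hins2]; exact Set.mem_insert_iff.mpr (Or.inr rfl)
        exact h'
      simp only [Set.mem_insert_iff, Set.mem_singleton_iff] at hmem
      rcases hmem with h' | h'
      · exact h'
      · exact absurd h' hz
    exact Prod.ext_iff.mpr ⟨e1, e2⟩
  -- the sequence
  obtain ⟨seq, hseqd⟩ : ∃ f : ℕ → V × V, f = fun k => (stepFn D')^[k] (a0, b0) := ⟨_, rfl⟩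
  have hseqk : ∀ k, seq k = (stepFn D')^[k] (a0, b0) := fun k => congrFun hseqd k
  have hsucc : ∀ k, seq (k+1) = stepFn D' (seq k) := by
    intro k; rw [hseqk, hseqk]; exact Function.iterate_succ_apply' _ _ _
  have hseq_valid : ∀ k, D' (seq k).1 (seq k).2 := by
    intro k
    induction k with
    | zero => rw [hseqk]; exact harc
    | succ k ih => rw [hsucc]; exact hvalid _ ih
  have hpigeon : ∃ i j, i < j ∧ seq i = seq j := by
    obtain ⟨i, j, hne, heq⟩ := Finite.exists_ne_map_eq_of_infinite seq
    rcases lt_or_gt_of_ne hne with h | h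
    · exact ⟨i, j, h, heq⟩
    · exact ⟨j, i, h, heq.symm⟩
  have hshift : ∀ i j, seq i = seq (i + j) → seq 0 = seq j := by
    intro i
    induction i with
    | zero => intro j h; rwa [Nat.zero_add] at h
    | succ i ih =>
      intro j h
      apply ih
      apply hstep_inj _ _ (hseq_valid i) (hseq_valid (i + j))
      rw [← hsucc, ← hsucc]
      have e : i + j + 1 = i + 1 + j := by omega
      rw [e]
      exact h
  obtain ⟨i0, j0, hij0, heq0⟩ := hpigeon
  have hex : ∃ t, 0 < t ∧ seq 0 = seq t := by
    refine ⟨j0 - i0, by omega, hshift i0 _ ?_⟩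
    rw [Nat.add_sub_cancel' (le_of_lt hij0)]
    exact heq0
  obtain ⟨hn_pos, hn_eq⟩ := Nat.find_spec hex
  have hn_min : ∀ t, 0 < t → t < Nat.find hex → seq 0 ≠ seq t :=
    fun t h1 h2 h3 => Nat.find_min hex h2 ⟨h1, h3⟩
  set n := Nat.find hex with hn_def
  have hper : ∀ k, seq (k + n) = seq k := by
    intro k
    induction k with
    | zero => rw [Nat.zero_add]; exact hn_eq.symm
    | succ k ih =>
      have e : k + 1 + n = (k + n) + 1 := by omega
      rw [e, hsucc, hsucc, ih]
  have hmod : ∀ k, seq k = seq (k % n) := by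
    intro k
    induction k using Nat.strong_induction_on with
    | _ k ih =>
      by_cases hk : k < n
      · rw [Nat.mod_eq_of_lt hk]
      · push_neg at hk
        calc seq k = seq ((k - n) + n) := by rw [Nat.sub_add_cancel hk]
        _ = seq (k - n) := hper _
        _ = seq ((k - n) % n) := ih _ (by omega)
        _ = seq (k % n) := by rw [← Nat.mod_eq_sub_mod hk]
  have hseq_inj : ∀ i j, i < n → j < n → seq i = seq j → i = j := by
    have aux : ∀ i j, i < j → j < n → seq i = seq j → False := by
      intro i j hlt hj h
      have h0 := hshift i (j - i) (by rw [Nat.add_sub_cancel' (le_of_lt hlt)]; exact h)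
      exact hn_min (j - i) (by omega) (by omega) h0
    intro i j hi hj h
    rcases Nat.lt_trichotomy i j with hlt | heq | hgt
    · exact ((aux i j hlt hj h)).elim
    · exact heq
    · exact ((aux j i hgt hi h.symm)).elim
  have hmirror : ∀ (t : ℕ) (s : V × V), D' s.1 s.2 →
      (stepFn D')^[t] (sigmaFn D' ((stepFn D')^[t] s)) = sigmaFn D' s := by
    intro t
    induction t with
    | zero => intro s h; rfl
    | succ t ih =>
      intro s h
      have h1 : (stepFn D')^[t+1] s = (stepFn D')^[t] (stepFn D' s) :=
        Function.iterate_succ_apply _ _ _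
      rw [h1, Function.iterate_succ_apply', ih (stepFn D' s) (hvalid s h)]
      exact hkey s h
  have hvalid_iter : ∀ (t : ℕ) (s : V × V), D' s.1 s.2 →
      D' ((stepFn D')^[t] s).1 ((stepFn D')^[t] s).2 := by
    intro t
    induction t with
    | zero => exact fun s h => h
    | succ t ih =>
      intro s h
      rw [Function.iterate_succ_apply']
      exact hvalid _ (ih s h)
  have hiter_inj : ∀ (t : ℕ) (s t' : V × V), D' s.1 s.2 → D' t'.1 t'.2 →
      (stepFn D')^[t] s = (stepFn D')^[t] t' → s = t' := by
    intro t
    induction t with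
    | zero => exact fun s t' _ _ h => h
    | succ t ih =>
      intro s t' hs ht' h
      rw [Function.iterate_succ_apply', Function.iterate_succ_apply'] at h
      exact ih s t' hs ht' (hstep_inj _ _ (hvalid_iter t s hs) (hvalid_iter t t' ht') h)
  -- injectivity of the vertex sequence
  have hvinj : ∀ i j, i < n → j < n → (seq i).1 = (seq j).1 → i = j := by
    have aux : ∀ i j, i < j → j < n → (seq i).1 = (seq j).1 → False := by
      intro i j hlt hj hvij
      have hpne : (seq i).2 ≠ (seq j).2 := by
        intro hp
        have := hseq_inj i j (lt_trans hlt hj) hj (Prod.ext_iff.mpr ⟨hvij, hp⟩)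
        omega
      have hsig : sigmaFn D' (seq i) = seq j := by
        obtain ⟨⟨hne2, houtq⟩, -⟩ := hspec (seq i) (hseq_valid i)
        have hpj : (seq j).2 ∈ {x | D' (seq i).1 x} := by
          have h' := hseq_valid j
          rw [← hvij] at h'
          exact h'
        rw [houtq] at hpj
        simp only [Set.mem_insert_iff, Set.mem_singleton_iff] at hpj
        rcases hpj with h' | h'
        · exact absurd h'.symm hpne
        · exact Prod.ext_iff.mpr ⟨hvij, h'.symm⟩
      have key : ∀ t, i + t ≤ j → sigmaFn D' (seq (i + t)) = seq (j - t) := by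
        intro t hij2
        apply hiter_inj t _ _ (hsigma_valid _ (hseq_valid (i+t))) (hseq_valid (j - t))
        have e1 : seq (i + t) = (stepFn D')^[t] (seq i) := by
          rw [hseqk, hseqk, Nat.add_comm]
          exact Function.iterate_add_apply _ _ _ _
        have e2 : seq j = (stepFn D')^[t] (seq (j - t)) := by
          have h' := Function.iterate_add_apply (stepFn D') t (j - t) (a0, b0)
          rw [show t + (j - t) = j by omega] at h'
          rw [hseqk, hseqk]
          exact h'
        rw [e1, hmirror t (seq i) (hseq_valid i), hsig, e2]
      rcases Nat.even_or_odd (j - i) with ⟨t, ht⟩ | ⟨t, ht⟩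
      · have h1 : sigmaFn D' (seq (i + t)) = seq (i + t) := by
          have h' := key t (by omega)
          rwa [show j - t = i + t by omega] at h'
        obtain ⟨⟨hne2, -⟩, -⟩ := hspec (seq (i+t)) (hseq_valid (i+t))
        have h2' := congrArg Prod.snd h1
        have h2 : (stepFn D' (seq (i+t))).2 = (seq (i+t)).2 := h2'
        exact hne2 h2
      · have h1 : sigmaFn D' (seq (i + t)) = seq (i + t + 1) := by
          have h' := key t (by omega)
          rwa [show j - t = i + t + 1 by omega] at h'
        rw [hsucc] at h1
        obtain ⟨-, ⟨hne1, -⟩⟩ := hspec (seq (i+t)) (hseq_valid (i+t))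
        have h2' := congrArg Prod.fst h1
        have h2 : (seq (i+t)).1 = (stepFn D' (seq (i+t))).1 := h2'
        exact hne1 h2.symm
    intro i j hi hj h
    rcases Nat.lt_trichotomy i j with hlt | heq | hgt
    · exact (aux i j hlt hj h).elim
    · exact heq
    · exact (aux j i hgt hi h.symm).elim
  -- consecutive structure
  have houtv : ∀ k, {x | D' (seq k).1 x} = {(seq k).2, (seq (k+1)).2} := by
    intro k
    obtain ⟨⟨-, houts⟩, -⟩ := hspec (seq k) (hseq_valid k)
    rw [hsucc k]
    exact houts
  have hinp : ∀ k, {z | D' z ((seq (k+1)).2)} = {(seq k).1, (seq (k+1)).1} := by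
    intro k
    obtain ⟨-, ⟨-, hins⟩⟩ := hspec (seq k) (hseq_valid k)
    rw [hsucc k]
    exact hins
  have hpcons : ∀ k, (seq (k+1)).2 ≠ (seq k).2 := by
    intro k
    obtain ⟨⟨h1, -⟩, -⟩ := hspec (seq k) (hseq_valid k)
    rw [hsucc k]
    exact h1
  have hvcons : ∀ k, (seq (k+1)).1 ≠ (seq k).1 := by
    intro k
    obtain ⟨-, ⟨h1, -⟩⟩ := hspec (seq k) (hseq_valid k)
    rw [hsucc k]
    exact h1
  have hDp : ∀ k, D' ((seq k).1) ((seq (k+1)).2) := by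
    intro k
    have h' : (seq (k+1)).2 ∈ {x | D' (seq k).1 x} := by
      rw [houtv k]; exact Set.mem_insert_iff.mpr (Or.inr rfl)
    exact h'
  -- n ≥ 4
  have hn1 : n ≠ 1 := by
    intro h
    rw [h] at hn_eq
    exact hvcons 0 (congrArg Prod.fst hn_eq.symm)
  have hn2 : n ≠ 2 := by
    intro h
    rw [h] at hn_eq
    have h20 : (seq 2).1 = (seq 0).1 := congrArg Prod.fst hn_eq.symm
    have hne01 : (seq 0).1 ≠ (seq 1).1 := Ne.symm (hvcons 0)
    have hc2a : D' ((seq 0).1) ((seq 2).2) := by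
      have h' := hseq_valid 2
      rwa [h20] at h'
    have hlt : 1 < {x | D' ((seq 0).1) x ∧ D' ((seq 1).1) x}.ncard := by
      rw [Set.one_lt_ncard_iff (Set.toFinite _)]
      exact ⟨(seq 1).2, (seq 2).2, ⟨hDp 0, hseq_valid 1⟩, ⟨hc2a, hDp 1⟩, Ne.symm (hpcons 1)⟩
    have := hirr _ _ hne01
    omega
  have hn3 : n ≠ 3 := by
    intro h
    rw [h] at hn_eq
    have h30 : (seq 3).1 = (seq 0).1 := congrArg Prod.fst hn_eq.symm
    have hadj01 : (compGraph D').Adj ((seq 0).1) ((seq 1).1) :=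
      ⟨Ne.symm (hvcons 0), (seq 1).2, hDp 0, hseq_valid 1⟩
    have hadj12 : (compGraph D').Adj ((seq 1).1) ((seq 2).1) :=
      ⟨Ne.symm (hvcons 1), (seq 2).2, hDp 1, hseq_valid 2⟩
    have hadj02 : (compGraph D').Adj ((seq 0).1) ((seq 2).1) := by
      refine ⟨?_, (seq 3).2, ?_, hDp 2⟩
      · intro he
        have := hvinj 0 2 (by omega) (by omega) he
        omega
      · have h' := hseq_valid 3
        rwa [h30] at h'
    exact htf _ (SimpleGraph.is3Clique_triple_iff.mpr ⟨hadj01, hadj02, hadj12⟩)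
  have hn4 : 4 ≤ n := by
    have := hn_pos
    omega
  intro hch
  obtain ⟨m, hm⟩ : ∃ m, n = m + 4 := ⟨n - 4, by omega⟩
  rw [hm] at hvinj hmod hn_eq
  -- out-neighbourhoods in D and D' agree on the cycle
  have houtD : ∀ k, {x | D ((seq k).1) x} = {x | D' ((seq k).1) x} := by
    intro k
    refine (Set.eq_of_subset_of_ncard_le (fun x hx => hsub _ x hx) ?_ (Set.toFinite _)).symm
    show {x | D ((seq k).1) x}.ncard ≤ {x | D' ((seq k).1) x}.ncard
    rw [hout2 (hseq_valid k)]
    exact hDout _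
  have hadj_cons : ∀ k : ℕ, (compGraph D).Adj ((seq k).1) ((seq (k+1)).1) :=
    fun k => ⟨Ne.symm (hvcons k), (seq (k+1)).2, hsub _ _ (hDp k), hsub _ _ (hseq_valid (k+1))⟩
  have hcompadj : ∀ a b : Fin (m+4),
      (compGraph D).Adj ((seq a.val).1) ((seq b.val).1) ↔
        (SimpleGraph.cycleGraph (m+4)).Adj a b := by
    intro a b
    constructor
    · rintro ⟨hne, x, hxa, hxb⟩
      have hDa : D' ((seq a.val).1) x := by
        have h' : x ∈ {x | D ((seq a.val).1) x} := hxa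
        rw [houtD] at h'
        exact h'
      have hDb : D' ((seq b.val).1) x := by
        have h' : x ∈ {x | D ((seq b.val).1) x} := hxb
        rw [houtD] at h'
        exact h'
      have hxa' : x = (seq a.val).2 ∨ x = (seq (a.val+1)).2 := by
        have h' : x ∈ {x | D' ((seq a.val).1) x} := hDa
        rw [houtv] at h'
        simpa using h'
      have hxb' : x = (seq b.val).2 ∨ x = (seq (b.val+1)).2 := by
        have h' : x ∈ {x | D' ((seq b.val).1) x} := hDb
        rw [houtv] at h'
        simpa using h'
      rw [cycleAdj]
      rcases hxa' with h1 | h1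
      · rcases hxb' with h2 | h2
        · -- x = p_A = p_B : b = a - 1
          left
          have e34 : m + 3 + 1 = m + 4 := by omega
          rcases Nat.eq_zero_or_pos a.val with hA0 | hApos
          · -- a.val = 0 : use the wrap-around
            have hx0 : x = (seq (m+3+1)).2 := by
              rw [e34, ← hn_eq, ← hA0, ← h1]
            have hmem : (seq b.val).1 ∈ ({(seq (m+3)).1, (seq (m+3+1)).1} : Set V) := by
              rw [← hinp (m+3)]
              have h' : D' ((seq b.val).1) ((seq (m+3+1)).2) := by rw [← hx0]; exact hDb
              exact h'
            simp only [Set.mem_insert_iff, Set.mem_singleton_iff] at hmem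
            rcases hmem with h' | h'
            · have hB : b.val = m + 3 := hvinj b.val (m+3) b.isLt (by omega) h'
              apply Fin.ext
              rw [hA0, fin_val_add_one, hB, e34, Nat.mod_self]
            · exfalso
              apply hne
              have h2 : seq (m+3+1) = seq (m+4) := by rw [e34]
              rw [hA0, hn_eq]
              exact (h'.trans (congrArg Prod.fst h2)).symm
          · -- a.val = A' + 1
            obtain ⟨A', hA'⟩ : ∃ A', a.val = A' + 1 := ⟨a.val - 1, by omega⟩
            have hmem : (seq b.val).1 ∈ ({(seq A').1, (seq (A'+1)).1} : Set V) := by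
              rw [← hinp A']
              have h' : D' ((seq b.val).1) ((seq (A'+1)).2) := by rw [← hA', ← h1]; exact hDb
              exact h'
            simp only [Set.mem_insert_iff, Set.mem_singleton_iff] at hmem
            rcases hmem with h' | h'
            · have hB : b.val = A' := hvinj b.val A' b.isLt (by omega) h'
              apply Fin.ext
              rw [fin_val_add_one, hB, hA']
              rw [Nat.mod_eq_of_lt (by omega)]
            · exfalso
              apply hne
              rw [hA']
              exact h'.symm
        · -- x = p_A = p_{B+1} : a = b + 1
          left
          have hmem : (seq a.val).1 ∈ ({(seq b.val).1, (seq (b.val+1)).1} : Set V) := by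
            rw [← hinp b.val]
            have h' : D' ((seq a.val).1) ((seq (b.val+1)).2) := by rw [← h2]; exact hDa
            exact h'
          simp only [Set.mem_insert_iff, Set.mem_singleton_iff] at hmem
          rcases hmem with h' | h'
          · exact absurd h' hne
          · have hB : a.val = (b.val + 1) % (m+4) := by
              apply hvinj a.val ((b.val+1) % (m+4)) a.isLt (Nat.mod_lt _ (by omega))
              rw [← hmod]
              exact h'
            exact Fin.ext (by rw [fin_val_add_one]; exact hB)
      · -- x = p_{A+1}
        right
        have hmem : (seq b.val).1 ∈ ({(seq a.val).1, (seq (a.val+1)).1} : Set V) := by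
          rw [← hinp a.val]
          have h' : D' ((seq b.val).1) ((seq (a.val+1)).2) := by rw [← h1]; exact hDb
          exact h'
        simp only [Set.mem_insert_iff, Set.mem_singleton_iff] at hmem
        rcases hmem with h' | h'
        · exact absurd h'.symm hne
        · have hB : b.val = (a.val + 1) % (m+4) := by
            apply hvinj b.val ((a.val+1) % (m+4)) b.isLt (Nat.mod_lt _ (by omega))
            rw [← hmod]
            exact h'
          exact Fin.ext (by rw [fin_val_add_one]; exact hB)
    · intro h
      rcases (cycleAdj a b).mp h with h1 | h1
      · -- a = b + 1
        have e : seq a.val = seq (b.val + 1) := by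
          rw [h1, fin_val_add_one b, ← hmod]
        have h' := hadj_cons b.val
        rw [← congrArg Prod.fst e] at h'
        exact h'.symm
      · -- b = a + 1
        have e : seq b.val = seq (a.val + 1) := by
          rw [h1, fin_val_add_one a, ← hmod]
        have h' := hadj_cons a.val
        rw [← congrArg Prod.fst e] at h'
        exact h'
  exact (hch (m+4) (by omega)).false
    ⟨⟨fun k => (seq k.val).1, fun k l hkl => Fin.ext (hvinj k.val l.val k.isLt l.isLt hkl)⟩,
      hcompadj _ _⟩

end GoodNotChordal


theorem stmt13 {V : Type*} [Fintype V] (D : V → V → Prop) (i : ℕ)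
    (hD : IsIJDigraph D i 2) :
    IsChordal (compGraph D) ↔
      ∀ D' : V → V → Prop, (∀ u v, D' u v → D u v) → ¬ IsGoodDigraph D' := by
  obtain ⟨hloop, hinD, houtD⟩ := hD
  constructor
  · intro hch D' hsub hgood
    exact good_not_chordal hsub houtD hgood hch
  · intro h n hn
    refine ⟨fun f => ?_⟩
    obtain ⟨m, rfl⟩ : ∃ m, n = m + 4 := ⟨n - 4, by omega⟩
    obtain ⟨D', hsub, hgood⟩ := hole_to_good D hloop m f
    exact h D' hsub hgood
end

section
/- Let i, j, k, l, m, n be positive integers with i, j ≥ 2, j > l, and (i−1)j > (m−1)n. Then there exists a graph that is an ⟨i,j⟩ competition graph but is neither a ⟨k,l⟩ competition graph nor an ⟨m,n⟩ competition graph. (In particular, the graph obtained from the star K_{1,j} by replacing each edge at the center with a complete graph on i vertices containing the center works.) -/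
section Aux

variable {V W : Type*}

lemma transfer_dir (e : V ≃ W) {G : SimpleGraph W} {i j : ℕ}
    (h : IsIJCompGraph G i j) : IsIJCompGraph (G.comap e) i j := by
  obtain ⟨D, ⟨hloop, hin, hout⟩, hG⟩ := h
  refine ⟨fun x y => D (e x) (e y), ⟨?_, ?_, ?_⟩, ?_⟩
  · intro v hv; exact hloop _ hv
  · intro v
    have hs : {u | D (e u) (e v)} = e.symm '' {u | D u (e v)} := by
      ext x
      constructor
      · intro h; exact ⟨e x, h, e.symm_apply_apply x⟩
      · rintro ⟨u, hu, rfl⟩; simpa using hu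
    rw [hs, Set.ncard_image_of_injective _ e.symm.injective]
    exact hin _
  · intro u
    have hs : {w | D (e u) (e w)} = e.symm '' {w | D (e u) w} := by
      ext x
      constructor
      · intro h; exact ⟨e x, h, e.symm_apply_apply x⟩
      · rintro ⟨w, hw, rfl⟩; simpa using hw
    rw [hs, Set.ncard_image_of_injective _ e.symm.injective]
    exact hout _
  · ext x y
    show (x ≠ y ∧ ∃ w, D (e x) (e w) ∧ D (e y) (e w)) ↔ G.Adj (e x) (e y)
    rw [← hG]
    show _ ↔ (e x ≠ e y ∧ ∃ w, D (e x) w ∧ D (e y) w)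
    constructor
    · rintro ⟨hne, w, h1, h2⟩
      exact ⟨fun hh => hne (e.injective hh), e w, h1, h2⟩
    · rintro ⟨hne, w, h1, h2⟩
      refine ⟨fun hh => hne (by rw [hh]), e.symm w, ?_, ?_⟩ <;> simpa

lemma transfer (e : V ≃ W) (G : SimpleGraph W) (i j : ℕ) :
    IsIJCompGraph (G.comap e) i j ↔ IsIJCompGraph G i j := by
  refine ⟨fun h => ?_, transfer_dir e⟩
  have := transfer_dir e.symm h
  have heq : ((G.comap ⇑e).comap ⇑e.symm) = G := by
    ext x y; simp
  rwa [heq] at this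

/-- The star-of-cliques digraph: everybody in clique `t` points to vertex `0` of
clique `t+1`. -/
def D0 (j a : ℕ) [NeZero j] (p q : Option (Fin j × Fin (a + 1))) : Prop :=
  ∃ t : Fin j, q = some (t + 1, 0) ∧ (p = none ∨ ∃ x, p = some (t, x))

variable {j a : ℕ} [NeZero j]

lemma add_one_ne (hj : 2 ≤ j) (t : Fin j) : t + 1 ≠ t := by
  intro h
  have h1 : (1 : Fin j) = 0 := by
    have h2 : t + 1 = t + 0 := by rw [add_zero]; exact h
    exact add_left_cancel h2
  have hv := congrArg Fin.val h1
  rw [Fin.val_one', Fin.val_zero, Nat.mod_eq_of_lt (by omega : 1 < j)] at hv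
  exact one_ne_zero hv

lemma D0_loopless (hj : 2 ≤ j) : ∀ p, ¬ D0 j a p p := by
  rintro p ⟨t, rfl, hp⟩
  rcases hp with h | ⟨x, h⟩
  · simp at h
  · simp only [Option.some_inj, Prod.mk.injEq] at h
    exact add_one_ne hj t h.1

lemma D0_indeg (q : Option (Fin j × Fin (a + 1))) :
    {p | D0 j a p q}.ncard ≤ a + 2 := by
  by_cases hq : ∃ t : Fin j, q = some (t + 1, 0)
  · obtain ⟨t, rfl⟩ := hq
    have hs : {p | D0 j a p (some (t + 1, 0))} =
        insert none ((fun x : Fin (a+1) => (some (t, x) : Option (Fin j × Fin (a+1)))) '' Set.univ) := by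
      ext p
      simp only [Set.mem_setOf_eq, Set.mem_insert_iff, Set.mem_image, Set.mem_univ, true_and, D0]
      constructor
      · rintro ⟨t', ht', hp⟩
        have htt : t' = t := by
          simp only [Option.some_inj, Prod.mk.injEq] at ht'
          exact (add_right_cancel ht'.1).symm
        subst htt
        rcases hp with h | ⟨x, h⟩
        · exact Or.inl h
        · exact Or.inr ⟨x, h.symm⟩
      · rintro (rfl | ⟨x, rfl⟩)
        · exact ⟨t, rfl, Or.inl rfl⟩
        · exact ⟨t, rfl, Or.inr ⟨x, rfl⟩⟩
    rw [hs]
    calc (insert none ((fun x : Fin (a+1) => (some (t, x) : Option (Fin j × Fin (a+1)))) '' Set.univ)).ncard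
        ≤ ((fun x : Fin (a+1) => (some (t, x) : Option (Fin j × Fin (a+1)))) '' Set.univ).ncard + 1 :=
          Set.ncard_insert_le _ _
      _ ≤ a + 2 := by
          rw [Set.ncard_image_of_injective _ (fun x y hxy => by
            simp only [Option.some_inj, Prod.mk.injEq] at hxy; exact hxy.2)]
          rw [Set.ncard_univ]
          simp
  · have hs : {p | D0 j a p q} = ∅ := by
      ext p
      simp only [Set.mem_setOf_eq, Set.mem_empty_iff_false, iff_false, D0]
      rintro ⟨t, ht, -⟩
      exact hq ⟨t, ht⟩
    rw [hs]; simp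

lemma D0_outdeg (hj : 2 ≤ j) (p : Option (Fin j × Fin (a + 1))) :
    {w | D0 j a p w}.ncard ≤ j := by
  match p with
  | none =>
    have hs : {w | D0 j a (none : Option (Fin j × Fin (a+1))) w} =
        (fun t : Fin j => (some (t + 1, 0) : Option (Fin j × Fin (a+1)))) '' Set.univ := by
      ext w
      simp only [Set.mem_setOf_eq, Set.mem_image, Set.mem_univ, true_and, D0]
      constructor
      · rintro ⟨t, rfl, -⟩; exact ⟨t, rfl⟩
      · rintro ⟨t, rfl⟩; exact ⟨t, rfl, by simp⟩
    rw [hs, Set.ncard_image_of_injective _ (fun x y hxy => by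
      simp only [Option.some_inj, Prod.mk.injEq] at hxy
      exact add_right_cancel hxy.1), Set.ncard_univ]
    simp
  | some (s, x) =>
    have hs : {w | D0 j a (some (s, x)) w} = {some (s + 1, 0)} := by
      ext w
      simp only [Set.mem_setOf_eq, Set.mem_singleton_iff, D0]
      constructor
      · rintro ⟨t, rfl, h | ⟨y, h⟩⟩
        · simp at h
        · simp only [Option.some_inj, Prod.mk.injEq] at h
          rw [h.1]
      · rintro rfl
        exact ⟨s, rfl, Or.inr ⟨x, rfl⟩⟩
    rw [hs, Set.ncard_singleton]
    omega

lemma center_adj (t : Fin j) (x : Fin (a + 1)) :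
    (compGraph (D0 j a)).Adj none (some (t, x)) := by
  refine ⟨by simp, some (t + 1, 0), ⟨t, rfl, Or.inl rfl⟩, ⟨t, rfl, Or.inr ⟨x, rfl⟩⟩⟩

lemma adj_same_clique {t s : Fin j} {x y : Fin (a + 1)}
    (h : (compGraph (D0 j a)).Adj (some (t, x)) (some (s, y))) : t = s := by
  obtain ⟨-, w, ⟨t1, rfl, hp⟩, ⟨t2, hw2, hq⟩⟩ := h
  have ht12 : t1 = t2 := by
    simp only [Option.some_inj, Prod.mk.injEq] at hw2
    exact add_right_cancel hw2.1
  subst ht12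
  rcases hp with h | ⟨x', h⟩
  · simp at h
  rcases hq with h' | ⟨y', h'⟩
  · simp at h'
  simp only [Option.some_inj, Prod.mk.injEq] at h h'
  rw [h.1, h'.1]

lemma not_kl (hj : 2 ≤ j) {k l : ℕ} (hl : l < j) :
    ¬ IsIJCompGraph (compGraph (D0 j a)) k l := by
  rintro ⟨D, ⟨hloop, hin, hout⟩, hG⟩
  have hadj : ∀ t : Fin j, (compGraph D).Adj none (some (t, 0)) := by
    intro t; rw [hG]; exact center_adj t 0
  have hex : ∀ t : Fin j, ∃ w, D none w ∧ D (some (t, (0 : Fin (a+1)))) w := by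
    intro t; exact (hadj t).2
  choose f hf1 hf2 using hex
  have hinj : Function.Injective f := by
    intro t s hts
    by_contra hne
    have hadj2 : (compGraph D).Adj (some (t, (0 : Fin (a+1)))) (some (s, 0)) := by
      refine ⟨by simp [hne], f t, hf2 t, hts ▸ hf2 s⟩
    rw [hG] at hadj2
    exact hne (adj_same_clique hadj2)
  have hsub : Set.range f ⊆ {w | D none w} := by
    rintro w ⟨t, rfl⟩; exact hf1 t
  have hcard : (Set.range f).ncard = j := by
    rw [← Set.image_univ, Set.ncard_image_of_injective _ hinj, Set.ncard_univ]
    simp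
  have := Set.ncard_le_ncard hsub (Set.toFinite _)
  rw [hcard] at this
  have := hout none
  omega

lemma not_mn (hj : 2 ≤ j) {m n : ℕ} (hm : 1 ≤ m) (hmn : (m - 1) * n < (a + 1) * j) :
    ¬ IsIJCompGraph (compGraph (D0 j a)) m n := by
  classical
  rintro ⟨D, ⟨hloop, hin, hout⟩, hG⟩
  set S : Finset (Option (Fin j × Fin (a+1))) :=
    (Finset.univ : Finset (Fin j × Fin (a+1))).image some with hS
  set P : Finset (Option (Fin j × Fin (a+1))) := {w | D none w}.toFinset with hP
  have hexS : ∀ v ∈ S, ∃ w, D none w ∧ D v w := by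
    intro v hv
    rw [hS, Finset.mem_image] at hv
    obtain ⟨⟨t, x⟩, -, rfl⟩ := hv
    have : (compGraph D).Adj none (some (t, x)) := by rw [hG]; exact center_adj t x
    exact this.2
  let g : Option (Fin j × Fin (a+1)) → Option (Fin j × Fin (a+1)) :=
    fun v => if h : ∃ w, D none w ∧ D v w then h.choose else none
  have hmaps : ∀ v ∈ S, g v ∈ P := by
    intro v hv
    have h := hexS v hv
    simp only [g, dif_pos h]
    rw [hP, Set.mem_toFinset]
    exact h.choose_spec.1
  have hfib : ∀ w ∈ P, (S.filter (fun v => g v = w)).card ≤ m - 1 := by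
    intro w hw
    rw [hP, Set.mem_toFinset] at hw
    have hsub : S.filter (fun v => g v = w) ⊆ ({p | D p w}.toFinset).erase none := by
      intro v hv
      rw [Finset.mem_filter] at hv
      obtain ⟨hvS, hgv⟩ := hv
      have h := hexS v hvS
      have hDvw : D v w := by
        have := h.choose_spec.2
        simp only [g, dif_pos h] at hgv
        rwa [hgv] at this
      have hvne : v ≠ none := by
        rw [hS, Finset.mem_image] at hvS
        obtain ⟨-, -, rfl⟩ := hvS
        simp
      rw [Finset.mem_erase, Set.mem_toFinset]
      exact ⟨hvne, hDvw⟩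
    have hnone : (none : Option (Fin j × Fin (a+1))) ∈ {p | D p w}.toFinset := by
      rw [Set.mem_toFinset]; exact hw
    calc (S.filter (fun v => g v = w)).card
        ≤ (({p | D p w}.toFinset).erase none).card := Finset.card_le_card hsub
      _ = ({p | D p w}.toFinset).card - 1 := Finset.card_erase_of_mem hnone
      _ ≤ m - 1 := by
          have := hin w
          rw [Set.ncard_eq_toFinset_card'] at this
          omega
  have hcount := Finset.card_le_mul_card_image_of_maps_to hmaps (m - 1) hfib
  have hScard : S.card = j * (a + 1) := by
    rw [hS, Finset.card_image_of_injective _ (Option.some_injective _)]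
    simp
  have hPcard : P.card ≤ n := by
    have := hout none
    rw [Set.ncard_eq_toFinset_card'] at this
    exact this
  rw [hScard] at hcount
  have : (m - 1) * P.card ≤ (m - 1) * n := Nat.mul_le_mul_left _ hPcard
  nlinarith [hcount, this, hmn]

end Aux

theorem stmt16 (i j k l m n : ℕ) (hk : 1 ≤ k) (hm : 1 ≤ m)
    (hi : 2 ≤ i) (hj : 2 ≤ j) (hl : l < j) (hmn : (m - 1) * n < (i - 1) * j) :
    ∃ (N : ℕ) (G : SimpleGraph (Fin N)),
      IsIJCompGraph G i j ∧ ¬ IsIJCompGraph G k l ∧ ¬ IsIJCompGraph G m n := by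
  haveI : NeZero j := ⟨by omega⟩
  obtain ⟨a, rfl⟩ : ∃ a, i = a + 2 := ⟨i - 2, by omega⟩
  have ecard : Fintype.card (Option (Fin j × Fin (a + 1))) = j * (a + 1) + 1 := by
    simp
  let e : Option (Fin j × Fin (a + 1)) ≃ Fin (j * (a + 1) + 1) :=
    Fintype.equivFinOfCardEq ecard
  refine ⟨j * (a + 1) + 1, (compGraph (D0 j a)).comap ⇑e.symm, ?_, ?_, ?_⟩
  · rw [transfer e.symm]
    exact ⟨D0 j a, ⟨D0_loopless hj, fun q => D0_indeg q, fun p => D0_outdeg hj p⟩, rfl⟩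
  · rw [transfer e.symm]
    exact not_kl hj hl
  · rw [transfer e.symm]
    exact not_mn hj hm (by simpa using hmn)
end

section
/- Let i, j, k, l be positive integers with i > k² − k + 1. Then the disjoint union of two complete graphs K_i is an ⟨i,j⟩ competition graph but is not a ⟨k,l⟩ competition graph; hence the family of ⟨i,j⟩ competition graphs is not contained in the family of ⟨k,l⟩ competition graphs. -/
/-- The disjoint union of two complete graphs on i vertices. -/
def twoCompleteGraphs (i : ℕ) : SimpleGraph (Fin 2 × Fin i) where
  Adj a b := a.1 = b.1 ∧ a.2 ≠ b.2
  symm := by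
    constructor
    rintro a b ⟨h1, h2⟩
    exact ⟨h1.symm, h2.symm⟩
  loopless := by
    constructor
    rintro a ⟨-, h⟩
    exact h rfl

lemma fin2_ne_ne {a b c : Fin 2} (h1 : a ≠ c) (h2 : b ≠ c) : a = b := by
  revert h1 h2; revert a b c; decide

lemma fin2_ne_succ (a : Fin 2) : a ≠ a + 1 := by revert a; decide

lemma fin2_eq_succ_of_ne {a b : Fin 2} (h : a ≠ b) : b = a + 1 := by
  revert h; revert a b; decide

theorem stmt17 (i j k l : ℕ) (hj : 1 ≤ j) (hk : 1 ≤ k) (hl : 1 ≤ l)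
    (h : k ^ 2 - k + 1 < i) :
    IsIJCompGraph (twoCompleteGraphs i) i j ∧
      ¬ IsIJCompGraph (twoCompleteGraphs i) k l := by
  have hkk : k ≤ k * k := Nat.le_mul_of_pos_left k hk
  rw [pow_two] at h
  have hi : 0 < i := by omega
  constructor
  · -- Part 1: it is an ⟨i,j⟩ competition graph
    refine ⟨fun u v => v.2.val = 0 ∧ u.1 ≠ v.1, ⟨?_, ?_, ?_⟩, ?_⟩
    · rintro v ⟨-, hv⟩; exact hv rfl
    · -- indegrees ≤ i
      intro v
      set S : Set (Fin 2 × Fin i) := {u | v.2.val = 0 ∧ u.1 ≠ v.1} with hS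
      have hinj : Set.InjOn Prod.snd S := by
        rintro u hu u' hu' he
        exact Prod.ext (fin2_ne_ne hu.2 hu'.2) he
      calc S.ncard = (Prod.snd '' S).ncard := (Set.ncard_image_of_injOn hinj).symm
        _ ≤ (Set.univ : Set (Fin i)).ncard :=
            Set.ncard_le_ncard (Set.subset_univ _) Set.finite_univ
        _ = i := by rw [Set.ncard_univ, Nat.card_eq_fintype_card, Fintype.card_fin]
    · -- outdegrees ≤ j
      intro u
      have hsub : {w : Fin 2 × Fin i | w.2.val = 0 ∧ u.1 ≠ w.1} ⊆ {(u.1 + 1, ⟨0, hi⟩)} := by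
        rintro w ⟨hw0, hw1⟩
        have h1 : w.1 = u.1 + 1 := fin2_eq_succ_of_ne hw1
        have h2 : w.2 = ⟨0, hi⟩ := Fin.ext hw0
        simp [Set.mem_singleton_iff, Prod.ext_iff, h1, h2]
      calc {w : Fin 2 × Fin i | w.2.val = 0 ∧ u.1 ≠ w.1}.ncard
          ≤ ({(u.1 + 1, ⟨0, hi⟩)} : Set (Fin 2 × Fin i)).ncard :=
            Set.ncard_le_ncard hsub (Set.finite_singleton _)
        _ = 1 := Set.ncard_singleton _
        _ ≤ j := hj
    · -- the competition graph is the right one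
      ext u v
      show (u ≠ v ∧ ∃ w, _) ↔ _
      constructor
      · rintro ⟨hne, w, ⟨-, h1⟩, ⟨-, h2⟩⟩
        have h3 : u.1 = v.1 := fin2_ne_ne h1 h2
        refine ⟨h3, fun he => hne (Prod.ext h3 he)⟩
      · rintro ⟨h1, h2⟩
        refine ⟨fun he => h2 (congrArg Prod.snd he), (u.1 + 1, ⟨0, hi⟩), ⟨rfl, fin2_ne_succ u.1⟩, ⟨rfl, h1 ▸ fin2_ne_succ u.1⟩⟩
  · -- Part 2: it is not a ⟨k,l⟩ competition graph
    rintro ⟨D, ⟨hloop, hin, hout⟩, hcomp⟩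
    classical
    let V := Fin 2 × Fin i
    set A : Finset (V × V) :=
      Finset.univ.filter (fun p : V × V => p.1.1 = p.2.1 ∧ p.1.2 ≠ p.2.2) with hA
    -- lower bound on A.card
    have hAcard : A.card = 2 * (i * i - i) := by
      have := Finset.card_bij'
        (s := A) (t := (Finset.univ : Finset (Fin 2)) ×ˢ (Finset.univ : Finset (Fin i)).offDiag)
        (fun p _ => (p.1.1, (p.1.2, p.2.2))) (fun q _ => ((q.1, q.2.1), (q.1, q.2.2)))
        (by
          intro p hp
          simp only [hA, Finset.mem_filter] at hp
          simp [Finset.mem_product, Finset.mem_offDiag, hp.2.2])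
        (by
          intro q hq
          simp only [Finset.mem_product, Finset.mem_offDiag] at hq
          simp [hA, hq.2.2.2])
        (by
          intro p hp
          simp only [hA, Finset.mem_filter] at hp
          ext <;> simp [hp.2.1])
        (by intro q hq; rfl)
      rw [this, Finset.card_product, Finset.offDiag_card]
      simp
    -- the witness function
    have hNe : Nonempty V := ⟨(0, ⟨0, hi⟩)⟩
    set f : V × V → V := fun p =>
      if h : ∃ w, D p.1 w ∧ D p.2 w then h.choose else hNe.some with hf
    have hfspec : ∀ p ∈ A, D p.1 (f p) ∧ D p.2 (f p) ∧ p.1 ≠ p.2 := by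
      intro p hp
      simp only [hA, Finset.mem_filter] at hp
      have hadj : (compGraph D).Adj p.1 p.2 := by
        rw [hcomp]; exact ⟨hp.2.1, hp.2.2⟩
      obtain ⟨hne, hex⟩ := hadj
      rw [hf]
      simp only [dif_pos hex]
      exact ⟨hex.choose_spec.1, hex.choose_spec.2, hne⟩
    set N : V → Finset V := fun w => Finset.univ.filter (fun u => D u w) with hN
    have hNcard : ∀ w, (N w).card ≤ k := by
      intro w
      have : ((N w : Set V)).ncard = (N w).card := Set.ncard_coe_finset _
      have he : (N w : Set V) = {u | D u w} := by ext u; simp [hN]; exact Iff.rfl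
      rw [he] at this
      rw [← this]
      exact hin w
    have hsum : A.card = ∑ w ∈ (Finset.univ : Finset V), (A.filter (fun p => f p = w)).card :=
      Finset.card_eq_sum_card_fiberwise (fun p _ => Finset.mem_univ _)
    have hfiber : ∀ w : V, (A.filter (fun p => f p = w)).card ≤ k * k - k := by
      intro w
      have hsub : A.filter (fun p => f p = w) ⊆ (N w).offDiag := by
        intro p hp
        rw [Finset.mem_filter] at hp
        obtain ⟨h1, h2, h3⟩ := hfspec p hp.1
        rw [Finset.mem_offDiag]
        rw [hp.2] at h1 h2
        exact ⟨by simp [hN, h1], by simp [hN, h2], h3⟩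
      calc (A.filter (fun p => f p = w)).card ≤ (N w).offDiag.card := Finset.card_le_card hsub
        _ = (N w).card * (N w).card - (N w).card := Finset.offDiag_card _
        _ ≤ k * k - k := by
            have := hNcard w
            have h1 : (N w).card * ((N w).card - 1) ≤ k * (k - 1) :=
              Nat.mul_le_mul this (by omega)
            simp only [Nat.mul_sub, mul_one] at h1
            exact h1
    have hub : A.card ≤ 2 * i * (k * k - k) := by
      rw [hsum]
      calc ∑ w ∈ (Finset.univ : Finset V), (A.filter (fun p => f p = w)).card
          ≤ ∑ _w ∈ (Finset.univ : Finset V), (k * k - k) :=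
            Finset.sum_le_sum (fun w _ => hfiber w)
        _ = 2 * i * (k * k - k) := by
            rw [Finset.sum_const, Finset.card_univ, smul_eq_mul]
            simp [V, Fintype.card_prod]
    -- contradiction
    rw [hAcard] at hub
    have hii : i ≤ i * i := Nat.le_mul_of_pos_left i hi
    have h2 : i * i - i ≤ i * (k * k - k) := by
      have : 2 * (i * i - i) ≤ 2 * (i * (k * k - k)) := by
        calc 2 * (i * i - i) ≤ 2 * i * (k * k - k) := hub
          _ = 2 * (i * (k * k - k)) := by ring
      omega
    have h3 : i * i ≤ i * (k * k - k) + i := by omega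
    have h4 : i * i ≤ i * ((k * k - k) + 1) := by rw [Nat.mul_succ]; exact h3
    have h5 : i ≤ k * k - k + 1 := Nat.le_of_mul_le_mul_left h4 hi
    omega
end

section
/- Let k ≥ 2 be an integer and let G be the graph with vertex set [k+1]^k (k-tuples with entries in {1,...,k+1}) in which two tuples are adjacent iff they differ in exactly one coordinate. Then G is a ⟨k+1,k⟩ competition graph, G is k²-regular, and |E(G)|/|V(G)| = k²/2 > k(k−1)/2; consequently G is not a ⟨k,l⟩ competition graph for any positive integer l. -/
/-- The Hamming graph on (k+1)-ary k-tuples: adjacent iff they differ in exactly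
one coordinate. -/
def hammingGraph (k : ℕ) : SimpleGraph (Fin k → Fin (k + 1)) where
  Adj x y := hammingDist x y = 1
  symm := by
    constructor
    intro x y h
    rwa [hammingDist_comm]
  loopless := by
    constructor
    intro x h
    simp [hammingDist_self] at h


open Finset

lemma hamming_one_iff {n : ℕ} {β : Type*} [DecidableEq β] (x z : Fin n → β) :
    hammingDist x z = 1 ↔ ∃ i, x i ≠ z i ∧ ∀ j, j ≠ i → x j = z j := by
  unfold hammingDist
  rw [Finset.card_eq_one]
  constructor
  · rintro ⟨i, hi⟩
    refine ⟨i, ?_, ?_⟩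
    · have : i ∈ Finset.univ.filter fun j => x j ≠ z j := hi ▸ Finset.mem_singleton_self i
      simpa using this
    · intro j hj
      by_contra h
      have : j ∈ Finset.univ.filter fun j => x j ≠ z j := by simpa using h
      rw [hi, Finset.mem_singleton] at this
      exact hj this
  · rintro ⟨i, hi, hoff⟩
    refine ⟨i, ?_⟩
    ext j
    simp only [Finset.mem_filter, Finset.mem_univ, true_and, Finset.mem_singleton]
    constructor
    · intro h; by_contra hj; exact h (hoff j hj)
    · rintro rfl; exact hi

def nxt {k : ℕ} (i : Fin k) : Fin k := ⟨(i.val + 1) % k, Nat.mod_lt _ i.pos⟩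

lemma nxt_ne {k : ℕ} (hk : 2 ≤ k) (i : Fin k) : nxt i ≠ i := by
  intro h
  have h' : (i.val + 1) % k = i.val := congrArg Fin.val h
  rcases Nat.lt_or_ge (i.val + 1) k with h1 | h1
  · rw [Nat.mod_eq_of_lt h1] at h'; omega
  · have h2 : i.val + 1 = k := by have := i.isLt; omega
    rw [h2, Nat.mod_self] at h'
    have := i.isLt; omega

def prey {k : ℕ} (i : Fin k) (x : Fin k → Fin (k + 1)) : Fin k → Fin (k + 1) :=
  fun m => if m = i then i.castSucc - (∑ j ∈ Finset.univ.erase i, x j) - 1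
    else if m = nxt i then x m + 1 else x m

open Fin.CommRing in
lemma sum_prey {k : ℕ} (hk : 2 ≤ k) (i : Fin k) (x : Fin k → Fin (k + 1)) :
    ∑ m, prey i x m = i.castSucc := by
  have hni : nxt i ≠ i := nxt_ne hk i
  rw [← Finset.add_sum_erase _ _ (Finset.mem_univ i)]
  have h1 : prey i x i = i.castSucc - (∑ j ∈ Finset.univ.erase i, x j) - 1 := by
    simp [prey]
  have hmem : nxt i ∈ Finset.univ.erase i := Finset.mem_erase.2 ⟨hni, Finset.mem_univ _⟩
  have h2 : prey i x (nxt i) = x (nxt i) + 1 := by simp [prey, hni]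
  have h3 : ∑ m ∈ (Finset.univ.erase i).erase (nxt i), prey i x m
      = ∑ m ∈ (Finset.univ.erase i).erase (nxt i), x m := by
    apply Finset.sum_congr rfl
    intro m hm
    simp only [Finset.mem_erase] at hm
    simp [prey, hm.1, hm.2.1]
  have h5 : ∑ m ∈ Finset.univ.erase i, prey i x m
      = (x (nxt i) + 1) + ∑ m ∈ (Finset.univ.erase i).erase (nxt i), x m := by
    rw [← Finset.add_sum_erase _ (prey i x) hmem, h2, h3]
  have h6 : ∑ j ∈ Finset.univ.erase i, x j
      = x (nxt i) + ∑ m ∈ (Finset.univ.erase i).erase (nxt i), x m :=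
    (Finset.add_sum_erase _ x hmem).symm
  rw [h1, h5, h6]
  ring

lemma prey_inj {k : ℕ} (hk : 2 ≤ k) {i i' : Fin k} {x x' : Fin k → Fin (k + 1)}
    (h : prey i x = prey i' x') : i = i' ∧ ∀ m, m ≠ i → x m = x' m := by
  have hi : i = i' := by
    have h1 : ∑ m, prey i x m = ∑ m, prey i' x' m := by rw [h]
    rw [sum_prey hk, sum_prey hk] at h1
    exact Fin.castSucc_injective k h1
  subst hi
  refine ⟨rfl, fun m hm => ?_⟩
  have hme := congrFun h m
  by_cases h2 : m = nxt i
  · subst h2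
    simpa [prey, hm] using hme
  · simpa [prey, hm, h2] using hme

open Fin.CommRing in
lemma prey_ne {k : ℕ} (hk : 2 ≤ k) (i : Fin k) (x : Fin k → Fin (k + 1)) :
    prey i x ≠ x := by
  intro h
  have hme := congrFun h (nxt i)
  rw [show prey i x (nxt i) = x (nxt i) + 1 by simp [prey, nxt_ne hk i]] at hme
  have h1 : (1 : Fin (k + 1)) = 0 := by
    calc (1 : Fin (k + 1)) = (x (nxt i) + 1) - x (nxt i) := by ring
    _ = x (nxt i) - x (nxt i) := by rw [hme]
    _ = 0 := by ring
  have h3 : (1 : Fin (k + 1)).val = 1 % (k + 1) := Fin.val_one' _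
  rw [h1] at h3
  rw [Nat.mod_eq_of_lt (by omega)] at h3
  simp at h3

lemma prey_congr {k : ℕ} (i : Fin k) {x x' : Fin k → Fin (k + 1)}
    (h : ∀ m, m ≠ i → x m = x' m) : prey i x = prey i x' := by
  funext m
  by_cases h1 : m = i
  · subst h1
    have hs : ∑ j ∈ Finset.univ.erase m, x j = ∑ j ∈ Finset.univ.erase m, x' j :=
      Finset.sum_congr rfl fun j hj => h j (Finset.mem_erase.1 hj).1
    simp [prey, hs]
  · by_cases h2 : m = nxt i
    · have h4 : nxt i ≠ i := h2 ▸ h1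
      have h5 : x (nxt i) = x' (nxt i) := h2 ▸ h m h1
      simp [prey, h1, h2, h4, h5]
    · simp [prey, h1, h2, h m h1]


open Fin.CommRing in
lemma hamming_regular {k : ℕ} (hk : 2 ≤ k) (v : Fin k → Fin (k + 1)) :
    ((hammingGraph k).neighborSet v).ncard = k ^ 2 := by
  classical
  set f : Fin k × Fin k → (Fin k → Fin (k + 1)) :=
    fun p => Function.update v p.1 (v p.1 + p.2.succ) with hf
  have hrange : (hammingGraph k).neighborSet v = Set.range f := by
    ext u
    simp only [SimpleGraph.mem_neighborSet, Set.mem_range]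
    constructor
    · intro h
      have h1 : hammingDist v u = 1 := h
      rw [hamming_one_iff] at h1
      obtain ⟨i, hi, hoff⟩ := h1
      have hc : u i - v i ≠ 0 := by
        intro h0
        apply hi
        have : u i = v i := by
          calc u i = (u i - v i) + v i := by ring
          _ = 0 + v i := by rw [h0]
          _ = v i := by ring
        exact this.symm
      refine ⟨(i, (u i - v i).pred hc), ?_⟩
      funext m
      by_cases hm : m = i
      · subst hm
        simp only [hf, Function.update_self]
        rw [Fin.succ_pred]
        ring
      · simp only [hf, Function.update_of_ne hm]
        exact hoff m hm
    · rintro ⟨⟨i, a⟩, rfl⟩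
      show hammingDist v _ = 1
      rw [hamming_one_iff]
      refine ⟨i, ?_, ?_⟩
      · simp only [hf, Function.update_self]
        rw [Ne, left_eq_add]
        exact Fin.succ_ne_zero a
      · intro j hj
        simp [hf, Function.update_of_ne hj]
  have hinj : Function.Injective f := by
    rintro ⟨i, a⟩ ⟨j, b⟩ h
    simp only [hf] at h
    have hij : i = j := by
      by_contra hij
      have h1 := congrFun h i
      rw [Function.update_self, Function.update_of_ne hij] at h1
      have : a.succ = 0 := by
        calc a.succ = (v i + a.succ) - v i := by ring
        _ = v i - v i := by rw [h1]
        _ = 0 := by ring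
      exact Fin.succ_ne_zero a this
    subst hij
    have h1 := congrFun h i
    rw [Function.update_self, Function.update_self] at h1
    have h2 : a.succ = b.succ := by
      calc a.succ = (v i + a.succ) - v i := by ring
      _ = (v i + b.succ) - v i := by rw [h1]
      _ = b.succ := by ring
    have : a = b := Fin.succ_injective _ h2
    rw [this]
  rw [hrange, ← Set.image_univ, Set.ncard_image_of_injective _ hinj, Set.ncard_univ,
    Nat.card_eq_fintype_card, Fintype.card_prod, Fintype.card_fin, sq]

lemma hamming_comp {k : ℕ} (hk : 2 ≤ k) :
    IsIJCompGraph (hammingGraph k) (k + 1) k := by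
  classical
  refine ⟨fun x y => ∃ i, y = prey i x, ⟨?_, ?_, ?_⟩, ?_⟩
  · rintro v ⟨i, hv⟩
    exact prey_ne hk i v hv.symm
  · intro y
    rcases Set.eq_empty_or_nonempty {u | ∃ i, y = prey i u} with hS | hS
    · rw [hS]; simp
    · obtain ⟨u₀, hu₀⟩ := hS
      obtain ⟨i₀, h₀⟩ : ∃ i, y = prey i u₀ := hu₀
      have hle : {u | ∃ i, y = prey i u}.ncard ≤ (Set.univ : Set (Fin (k + 1))).ncard := by
        apply Set.ncard_le_ncard_of_injOn (fun u => u i₀)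
        · intro u _; trivial
        · rintro u ⟨i, hi⟩ u' ⟨i', hi'⟩ huu
          have e1 : prey i u = prey i₀ u₀ := by rw [← hi, ← h₀]
          have e2 : prey i' u' = prey i₀ u₀ := by rw [← hi', ← h₀]
          obtain ⟨hii, hu⟩ := prey_inj hk e1
          obtain ⟨hii', hu'⟩ := prey_inj hk e2
          rw [hii] at hu
          rw [hii'] at hu'
          funext m
          by_cases hm : m = i₀
          · subst hm; exact huu
          · exact (hu m hm).trans (hu' m hm).symm
      rw [Set.ncard_univ, Nat.card_eq_fintype_card, Fintype.card_fin] at hle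
      exact hle
  · intro x
    have hset : {w | ∃ i, w = prey i x} = Set.range (fun i => prey i x) := by
      ext w; simp [Set.mem_range, eq_comm]
    rw [hset, ← Set.image_univ]
    calc ((fun i => prey i x) '' Set.univ).ncard ≤ (Set.univ : Set (Fin k)).ncard :=
      Set.ncard_image_le Set.finite_univ
    _ = k := by rw [Set.ncard_univ, Nat.card_eq_fintype_card, Fintype.card_fin]
  · ext u v
    show (u ≠ v ∧ ∃ w, (∃ i, w = prey i u) ∧ (∃ j, w = prey j v)) ↔ hammingDist u v = 1
    constructor
    · rintro ⟨hne, w, ⟨i, hi⟩, ⟨j, hj⟩⟩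
      have e : prey i u = prey j v := by rw [← hi, ← hj]
      obtain ⟨rfl, hoff⟩ := prey_inj hk e
      rw [hamming_one_iff]
      refine ⟨i, ?_, hoff⟩
      intro hvi
      apply hne
      funext m
      by_cases hm : m = i
      · subst hm; exact hvi
      · exact hoff m hm
    · intro h
      rw [hamming_one_iff] at h
      obtain ⟨i, hi, hoff⟩ := h
      refine ⟨?_, prey i u, ⟨i, rfl⟩, ⟨i, prey_congr i hoff⟩⟩
      intro h
      exact hi (congrFun h i)

lemma mul_sub_le_aux {m n : ℕ} (h : m ≤ n) : m * m - m ≤ n * (n - 1) := by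
  cases m with
  | zero => simp
  | succ m' =>
    have e : (m' + 1) * (m' + 1) - (m' + 1) = (m' + 1) * m' := by
      have : (m' + 1) * (m' + 1) = (m' + 1) * m' + (m' + 1) := by ring
      omega
    rw [e]
    exact Nat.mul_le_mul h (by omega)

lemma klt_aux {k : ℕ} (hk : 2 ≤ k) : k * (k - 1) < k ^ 2 := by
  rw [pow_two]
  exact mul_lt_mul_of_pos_left (by omega) (by omega)

lemma hamming_edges {k : ℕ} (hk : 2 ≤ k) :
    2 * (hammingGraph k).edgeSet.ncard = k ^ 2 * Fintype.card (Fin k → Fin (k + 1)) := by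
  classical
  have h1 := SimpleGraph.sum_degrees_eq_twice_card_edges (hammingGraph k)
  have h2 : ∀ v, (hammingGraph k).degree v = k ^ 2 := by
    intro v
    rw [← hamming_regular hk v, ← Nat.card_coe_set_eq, Nat.card_eq_fintype_card,
      SimpleGraph.card_neighborSet_eq_degree]
  have h3 : ∑ v, (hammingGraph k).degree v
      = Fintype.card (Fin k → Fin (k + 1)) * k ^ 2 := by
    rw [Finset.sum_congr rfl (fun v _ => h2 v), Finset.sum_const, Finset.card_univ,
      smul_eq_mul]
  rw [← SimpleGraph.coe_edgeFinset, Set.ncard_coe_finset, ← h1, h3, Nat.mul_comm]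

theorem stmt18 (k : ℕ) (hk : 2 ≤ k) :
    IsIJCompGraph (hammingGraph k) (k + 1) k ∧
      (∀ v, ((hammingGraph k).neighborSet v).ncard = k ^ 2) ∧
      2 * (hammingGraph k).edgeSet.ncard =
        k ^ 2 * Fintype.card (Fin k → Fin (k + 1)) ∧
      k * (k - 1) < k ^ 2 ∧
      (∀ l : ℕ, 1 ≤ l → ¬ IsIJCompGraph (hammingGraph k) k l) := by
  classical
  refine ⟨hamming_comp hk, fun v => hamming_regular hk v, hamming_edges hk, klt_aux hk, ?_⟩
  rintro l hl ⟨D, ⟨hloop, hin, hout⟩, hC⟩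
  have hA : ∀ a b, (hammingGraph k).Adj a b → ∃ w, D a w ∧ D b w := by
    intro a b hab
    rw [← hC] at hab
    exact hab.2
  have key : ∀ d : (hammingGraph k).Dart, ∃ w, D d.toProd.1 w ∧ D d.toProd.2 w :=
    fun d => hA _ _ d.adj
  choose wch hw1 hw2 using key
  set I : (Fin k → Fin (k + 1)) → Finset (Fin k → Fin (k + 1)) :=
    fun w => (Set.toFinite {u | D u w}).toFinset with hI
  have hIcard : ∀ w, (I w).card ≤ k := by
    intro w
    rw [hI, ← Set.ncard_eq_toFinset_card]
    exact hin w
  set f : (hammingGraph k).Dart → (Fin k → Fin (k + 1)) × ((Fin k → Fin (k + 1)) × (Fin k → Fin (k + 1))) :=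
    fun d => (wch d, d.toProd) with hfdef
  have hfinj : Function.Injective f := by
    intro d d' h
    exact SimpleGraph.Dart.toProd_injective (congrArg Prod.snd h)
  have hsub : Finset.univ.image f ⊆
      Finset.univ.biUnion (fun w => {w} ×ˢ (I w).offDiag) := by
    intro p hp
    rw [Finset.mem_image] at hp
    obtain ⟨d, -, rfl⟩ := hp
    rw [Finset.mem_biUnion]
    refine ⟨wch d, Finset.mem_univ _, ?_⟩
    rw [Finset.mem_product]
    refine ⟨Finset.mem_singleton_self _, ?_⟩
    rw [Finset.mem_offDiag]
    refine ⟨?_, ?_, ?_⟩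
    · exact (Set.Finite.mem_toFinset _).2 (hw1 d)
    · exact (Set.Finite.mem_toFinset _).2 (hw2 d)
    · exact (hammingGraph k).ne_of_adj d.adj
  have hcount : Fintype.card (hammingGraph k).Dart
      ≤ Fintype.card (Fin k → Fin (k + 1)) * (k * (k - 1)) := by
    have e1 : (Finset.univ.image f).card = Fintype.card (hammingGraph k).Dart := by
      rw [Finset.card_image_of_injective _ hfinj, Finset.card_univ]
    calc Fintype.card (hammingGraph k).Dart = (Finset.univ.image f).card := e1.symm
    _ ≤ (Finset.univ.biUnion fun w => {w} ×ˢ (I w).offDiag).card := Finset.card_le_card hsub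
    _ ≤ ∑ w, ({w} ×ˢ (I w).offDiag).card := Finset.card_biUnion_le
    _ ≤ ∑ _w : Fin k → Fin (k + 1), k * (k - 1) := by
        apply Finset.sum_le_sum
        intro w _
        rw [Finset.card_product, Finset.card_singleton, one_mul, Finset.offDiag_card]
        exact mul_sub_le_aux (hIcard w)
    _ = Fintype.card (Fin k → Fin (k + 1)) * (k * (k - 1)) := by
        rw [Finset.sum_const, Finset.card_univ, smul_eq_mul]
  have hdarts : Fintype.card (hammingGraph k).Dart = 2 * (hammingGraph k).edgeFinset.card :=
    SimpleGraph.dart_card_eq_twice_card_edges (hammingGraph k)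
  have hE : 2 * (hammingGraph k).edgeFinset.card = k ^ 2 * Fintype.card (Fin k → Fin (k + 1)) := by
    rw [← Set.ncard_coe_finset, SimpleGraph.coe_edgeFinset]
    exact hamming_edges hk
  rw [hdarts, hE] at hcount
  have hn : 0 < Fintype.card (Fin k → Fin (k + 1)) := Fintype.card_pos
  have hstep : Fintype.card (Fin k → Fin (k + 1)) * (k * (k - 1))
      < Fintype.card (Fin k → Fin (k + 1)) * k ^ 2 :=
    mul_lt_mul_of_pos_left (klt_aux hk) hn
  have h2 := lt_of_le_of_lt hcount hstep
  rw [Nat.mul_comm] at h2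
  exact lt_irrefl _ h2
end

section
/- Let i, j, k, l be positive integers with i = k ≥ 2 and j > l. Then every ⟨k,l⟩ competition graph is an ⟨i,j⟩ competition graph, and there exists an ⟨i,j⟩ competition graph that is not a ⟨k,l⟩ competition graph; i.e., the family of ⟨k,l⟩ competition graphs is strictly contained in the family of ⟨i,j⟩ competition graphs. -/
namespace StarAux

variable (m : ℕ)

/-- cyclic successor on the nonzero elements of `Fin (m+3)`. -/
def nxt (x : Fin (m+3)) : Fin (m+3) := if x = Fin.last (m+2) then 1 else x + 1

lemma val_add_one {x : Fin (m+3)} (h : x ≠ Fin.last (m+2)) :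
    ((x + 1 : Fin (m+3))).val = x.val + 1 :=
  Fin.val_add_one_of_lt (Fin.lt_last_iff_ne_last.mpr h)

lemma nxt_ne_zero (x : Fin (m+3)) : nxt m x ≠ 0 := by
  unfold nxt
  by_cases h1 : x = Fin.last (m+2)
  · rw [if_pos h1]
    exact one_ne_zero
  · rw [if_neg h1]
    intro h
    have hv := val_add_one m h1
    rw [h] at hv
    simp at hv

lemma nxt_injOn {x y : Fin (m+3)} (hx : x ≠ 0) (hy : y ≠ 0) (h : nxt m x = nxt m y) :
    x = y := by
  unfold nxt at h
  by_cases h1 : x = Fin.last (m+2) <;> by_cases h2 : y = Fin.last (m+2)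
  · rw [h1, h2]
  · rw [if_pos h1, if_neg h2] at h
    exfalso
    have hv := val_add_one m h2
    have hv1 : (1 : Fin (m+3)).val = y.val + 1 := by rw [h, hv]
    simp only [Fin.val_one] at hv1
    exact hy (Fin.ext (by simp only [Fin.val_zero]; omega))
  · rw [if_neg h1, if_pos h2] at h
    exfalso
    have hv := val_add_one m h1
    have hv1 : (1 : Fin (m+3)).val = x.val + 1 := by rw [← h, hv]
    simp only [Fin.val_one] at hv1
    exact hx (Fin.ext (by simp only [Fin.val_zero]; omega))
  · rw [if_neg h1, if_neg h2] at h
    exact add_right_cancel h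

/-- The digraph: 0 points to everything nonzero; a nonzero x points to nxt x. -/
def Dm (x y : Fin (m+3)) : Prop := (x = 0 ∧ y ≠ 0) ∨ (x ≠ 0 ∧ y = nxt m x)

/-- The star with center 0. -/
def Gstar : SimpleGraph (Fin (m+3)) where
  Adj u v := u ≠ v ∧ (u = 0 ∨ v = 0)
  symm := by constructor; rintro u v ⟨h, h'⟩; exact ⟨h.symm, h'.symm⟩
  loopless := by constructor; rintro u ⟨h, -⟩; exact h rfl

lemma ncard_ne_zero : {u : Fin (m+3) | u ≠ 0}.ncard = m + 2 := by
  rw [Set.ncard_eq_toFinset_card']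
  simp [Set.toFinset_setOf, Finset.filter_ne']

lemma compGraph_Dm : compGraph (Dm m) = Gstar m := by
  ext u v
  constructor
  · rintro ⟨huv, w, hu, hv⟩
    refine ⟨huv, ?_⟩
    by_contra hc
    push_neg at hc
    obtain ⟨hu0, hv0⟩ := hc
    rcases hu with ⟨h, -⟩ | ⟨-, hu⟩
    · exact hu0 h
    rcases hv with ⟨h, -⟩ | ⟨-, hv⟩
    · exact hv0 h
    exact huv (nxt_injOn m hu0 hv0 (hu ▸ hv ▸ rfl))
  · rintro ⟨huv, h0 | h0⟩
    · subst h0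
      refine ⟨huv, nxt m v, Or.inl ⟨rfl, nxt_ne_zero m v⟩, Or.inr ⟨Ne.symm huv, rfl⟩⟩
    · subst h0
      refine ⟨huv, nxt m u, Or.inr ⟨huv, rfl⟩, Or.inl ⟨rfl, nxt_ne_zero m u⟩⟩

lemma Dm_isDigraph : IsIJDigraph (Dm m) 2 (m + 2) := by
  refine ⟨?_, ?_, ?_⟩
  · intro v hv
    rcases hv with ⟨h0, hne⟩ | ⟨hne, hv⟩
    · exact hne h0
    · unfold nxt at hv
      by_cases h1 : v = Fin.last (m+2)
      · rw [if_pos h1] at hv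
        have hv1 : v.val = (1 : Fin (m+3)).val := by rw [hv]
        rw [h1] at hv1
        simp only [Fin.val_last, Fin.val_one] at hv1
        omega
      · rw [if_neg h1] at hv
        have h2 := val_add_one m h1
        rw [← hv] at h2
        omega
  · intro v
    by_cases hv : v = 0
    · subst hv
      have hem : {u : Fin (m+3) | Dm m u 0} = ∅ := by
        ext x
        simp only [Set.mem_setOf_eq, Set.mem_empty_iff_false, iff_false]
        rintro (⟨-, h⟩ | ⟨hx, h⟩)
        · exact h rfl
        · exact nxt_ne_zero m x h.symm
      rw [hem]
      simp
    · have hsub : {u : Fin (m+3) | Dm m u v} ⊆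
          {0, if v = 1 then Fin.last (m+2) else v - 1} := by
        rintro x (⟨h0, -⟩ | ⟨hx, hv'⟩)
        · exact Or.inl h0
        · right
          unfold nxt at hv'
          by_cases h1 : x = Fin.last (m+2)
          · rw [if_pos h1] at hv'
            rw [if_pos hv']
            simp [h1]
          · rw [if_neg h1] at hv'
            have hne1 : v ≠ 1 := by
              intro hv1
              have hval := val_add_one m h1
              rw [← hv', hv1] at hval
              simp only [Fin.val_one] at hval
              exact hx (Fin.ext (by simp only [Fin.val_zero]; omega))
            rw [if_neg hne1, hv']
            simp
      calc {u : Fin (m+3) | Dm m u v}.ncard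
          ≤ ({0, if v = 1 then Fin.last (m+2) else v - 1} : Set (Fin (m+3))).ncard :=
            Set.ncard_le_ncard hsub (Set.toFinite _)
        _ ≤ 1 + 1 := by
            refine le_trans (Set.ncard_insert_le _ _) ?_
            simp [Set.ncard_singleton]
        _ = 2 := rfl
  · intro u
    by_cases hu : u = 0
    · subst hu
      have heq : {w : Fin (m+3) | Dm m 0 w} = {w : Fin (m+3) | w ≠ 0} := by
        ext w
        simp [Dm]
      rw [heq, ncard_ne_zero]
    · have heq : {w : Fin (m+3) | Dm m u w} = {nxt m u} := by
        ext w
        simp only [Set.mem_setOf_eq, Set.mem_singleton_iff, Dm]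
        constructor
        · rintro (⟨h0, -⟩ | ⟨-, h⟩)
          · exact absurd h0 hu
          · exact h
        · intro h; exact Or.inr ⟨hu, h⟩
      rw [heq]
      simp

lemma Gstar_not_kl (k l : ℕ) (hl : l ≤ m + 1) : ¬ IsIJCompGraph (Gstar m) k l := by
  rintro ⟨D, ⟨-, -, hout⟩, hcomp⟩
  have hadj : ∀ u : Fin (m+3), u ≠ 0 → ∃ w, D 0 w ∧ D u w := by
    intro u hu
    have : (compGraph D).Adj 0 u := by
      rw [hcomp]
      exact ⟨Ne.symm hu, Or.inl rfl⟩
    exact this.2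
  classical
  set f : Fin (m+3) → Fin (m+3) := fun u =>
    if h : u ≠ 0 then Classical.choose (hadj u h) else 0 with hf
  have hfspec : ∀ u : Fin (m+3), u ≠ 0 → D 0 (f u) ∧ D u (f u) := by
    intro u hu
    simp only [hf, dif_pos hu]
    exact Classical.choose_spec (hadj u hu)
  have hinj : Set.InjOn f {u : Fin (m+3) | u ≠ 0} := by
    intro x hx y hy hxy
    by_contra hne
    have hxs := hfspec x hx
    have hys := hfspec y hy
    have : (compGraph D).Adj x y := ⟨hne, f x, hxs.2, hxy ▸ hys.2⟩
    rw [hcomp] at this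
    rcases this.2 with h | h
    · exact hx h
    · exact hy h
  have hsub : f '' {u : Fin (m+3) | u ≠ 0} ⊆ {w | D 0 w} := by
    rintro - ⟨u, hu, rfl⟩
    exact (hfspec u hu).1
  have h1 : (f '' {u : Fin (m+3) | u ≠ 0}).ncard = m + 2 := by
    rw [Set.ncard_image_of_injOn hinj, ncard_ne_zero]
  have h2 := Set.ncard_le_ncard hsub (Set.toFinite _)
  have h3 := hout 0
  omega

end StarAux

theorem stmt19 (i j k l : ℕ) (hik : i = k) (hk : 2 ≤ k) (hl : 1 ≤ l) (hjl : l < j) :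
    (∀ (n : ℕ) (G : SimpleGraph (Fin n)),
        IsIJCompGraph G k l → IsIJCompGraph G i j) ∧
      (∃ (n : ℕ) (G : SimpleGraph (Fin n)),
        IsIJCompGraph G i j ∧ ¬ IsIJCompGraph G k l) := by
  subst hik
  constructor
  · rintro n G ⟨D, ⟨h1, h2, h3⟩, h4⟩
    exact ⟨D, ⟨h1, h2, fun u => le_trans (h3 u) (le_of_lt hjl)⟩, h4⟩
  · obtain ⟨m, rfl⟩ : ∃ m, l = m + 1 := ⟨l - 1, by omega⟩
    refine ⟨m + 3, StarAux.Gstar m, ?_, StarAux.Gstar_not_kl m i (m+1) le_rfl⟩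
    refine ⟨StarAux.Dm m, ?_, StarAux.compGraph_Dm m⟩
    obtain ⟨hd1, hd2, hd3⟩ := StarAux.Dm_isDigraph m
    exact ⟨hd1, fun v => le_trans (hd2 v) (by omega), fun u => le_trans (hd3 u) (by omega)⟩
end
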